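/- arXiv:2309.14197 — 2 statements merged into one kernel-verified Lean document; each statement's English description precedes it below -/
import Mathlib

section
/- For all integers k ≥ 3 and 1 ≤ d < k and every γ > 0, there exists n₀ such that for every n ≥ n₀ the following holds. If G is an n-vertex k-graph with δ_d(G) ≥ (μ_d(k)+γ)·binom(n−d,k−d) and u, v ∈ V(G) are distinct vertices, then G contains a loose (u,v)-path of order 4(k−1)+1. -/
open Finset

attribute [local instance] Classical.propDecidable

/-- A (hyper)graph: a finite vertex set together with a finite set of edges,
each edge being a finite set of vertices. -/
structure HGraph where
  verts : Finset ℕ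
  edges : Finset (Finset ℕ)

namespace HGraph

/-- `G` is a `k`-graph: every edge is a `k`-element subset of the vertex set. -/
def IsUniform (G : HGraph) (k : ℕ) : Prop :=
  ∀ e ∈ G.edges, e ⊆ G.verts ∧ e.card = k

/-- The degree of a vertex set `S`: the number of edges containing `S`. -/
def deg (G : HGraph) (S : Finset ℕ) : ℕ :=
  (G.edges.filter fun e => S ⊆ e).card

/-- `δ_d(G) ≥ m`: every `d`-element subset of the vertices has degree at least `m`. -/
def MinDegAtLeast (G : HGraph) (d : ℕ) (m : ℝ) : Prop :=
  ∀ S ⊆ G.verts, S.card = d → m ≤ (G.deg S : ℝ)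

/-- The induced subgraph on a vertex set `A`. -/
def induce (G : HGraph) (A : Finset ℕ) : HGraph :=
  ⟨A, G.edges.filter fun e => e ⊆ A⟩

end HGraph

/-! ### Loose paths and loose cycles, encoded by their vertex sequence -/

/-- The `i`-th edge of the loose path with vertex sequence `vs`:
the vertices at positions `i(k-1), …, i(k-1)+k-1`. -/
def pathEdge (k : ℕ) (vs : List ℕ) (i : ℕ) : Finset ℕ :=
  ((List.range k).map fun j => vs.getD (i * (k - 1) + j) 0).toFinset

/-- The number of edges of a loose path on `vs.length` vertices. -/
def numPathEdges (k : ℕ) (vs : List ℕ) : ℕ := (vs.length - 1) / (k - 1)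

/-- `vs` is the vertex sequence of an (abstract) loose path: distinct vertices,
and the number of vertices is `≡ 1 (mod k-1)` and at least `k` (at least one edge). -/
def IsLoosePathList (k : ℕ) (vs : List ℕ) : Prop :=
  vs.Nodup ∧ k ≤ vs.length ∧ (k - 1) ∣ (vs.length - 1)

/-- The edges of the loose path with vertex sequence `vs`. -/
def pathEdges (k : ℕ) (vs : List ℕ) : Finset (Finset ℕ) :=
  ((List.range (numPathEdges k vs)).map (pathEdge k vs)).toFinset

/-- `vs` is the vertex sequence of a loose path in `G`. -/
def HGraph.IsLoosePath (G : HGraph) (k : ℕ) (vs : List ℕ) : Prop :=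
  IsLoosePathList k vs ∧ ∀ i < numPathEdges k vs, pathEdge k vs i ∈ G.edges

/-- `vs` is the vertex sequence of a loose `(u,v)`-path in `G`:
`u` is its first vertex and `v` its last vertex. -/
def HGraph.IsLooseUVPath (G : HGraph) (k : ℕ) (u v : ℕ) (vs : List ℕ) : Prop :=
  G.IsLoosePath k vs ∧ vs.head? = some u ∧ vs.getLast? = some v

/-- The `i`-th edge of the loose cycle with cyclic vertex sequence `vs`. -/
def cycleEdge (k : ℕ) (vs : List ℕ) (i : ℕ) : Finset ℕ :=
  ((List.range k).map fun j => vs.getD ((i * (k - 1) + j) % vs.length) 0).toFinset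

/-- `vs` is the cyclic vertex sequence of an (abstract) loose cycle. -/
def IsLooseCycleList (k : ℕ) (vs : List ℕ) : Prop :=
  vs.Nodup ∧ 3 * (k - 1) ≤ vs.length ∧ (k - 1) ∣ vs.length

/-- The edges of the loose cycle with cyclic vertex sequence `vs`. -/
def cycleEdges (k : ℕ) (vs : List ℕ) : Finset (Finset ℕ) :=
  ((List.range (vs.length / (k - 1))).map (cycleEdge k vs)).toFinset

/-- `vs` is the cyclic vertex sequence of a loose cycle in `G`. -/
def HGraph.IsLooseCycle (G : HGraph) (k : ℕ) (vs : List ℕ) : Prop :=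
  IsLooseCycleList k vs ∧ ∀ i < vs.length / (k - 1), cycleEdge k vs i ∈ G.edges

/-- `G` contains a loose Hamilton cycle. -/
def HGraph.HasLooseHamCycle (G : HGraph) (k : ℕ) : Prop :=
  ∃ vs : List ℕ, G.IsLooseCycle k vs ∧ vs.toFinset = G.verts

/-! ### The minimum-degree threshold `μ_d(k)` -/

/-- `μ` is large enough (as a minimum relative `d`-degree) to force loose Hamilton cycles. -/
def LooseHamProperty (k d : ℕ) (μ : ℝ) : Prop :=
  ∀ γ : ℝ, 0 < γ → ∃ n₀ : ℕ, ∀ n : ℕ, n₀ ≤ n → (k - 1) ∣ n →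
    ∀ G : HGraph, G.IsUniform k → G.verts.card = n →
      G.MinDegAtLeast d ((μ + γ) * ((n - d).choose (k - d) : ℝ)) →
      G.HasLooseHamCycle k

/-- The minimum `d`-degree threshold for loose Hamilton cycles. -/
noncomputable def muD (k d : ℕ) : ℝ :=
  sInf {μ : ℝ | μ ∈ Set.Icc (0 : ℝ) 1 ∧ LooseHamProperty k d μ}

/-! ### The binomial random `k`-graph -/

/-- All `k`-element subsets of `{0, …, n-1}`. -/
def kSets (n k : ℕ) : Finset (Finset ℕ) := (Finset.range n).powersetCard k

/-- The probability that `H_k(n,p)` (with vertex set `{0,…,n-1}`) has edge set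
satisfying the property `P`. -/
noncomputable def probRandom (n k : ℕ) (p : ℝ) (P : Finset (Finset ℕ) → Prop) : ℝ :=
  ∑ E ∈ (kSets n k).powerset,
    if P E then p ^ E.card * (1 - p) ^ ((kSets n k).card - E.card) else 0

/-- The `k`-graph on `{0,…,n-1}` with edge set `E`. -/
def graphOfEdges (n : ℕ) (E : Finset (Finset ℕ)) : HGraph :=
  ⟨Finset.range n, E⟩

/-- The probability that a uniformly random `m`-element subset of `U` satisfies `P`. -/
noncomputable def fracSubsets (U : Finset ℕ) (m : ℕ) (P : Finset ℕ → Prop) : ℝ :=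
  (((U.powersetCard m).filter P).card : ℝ) / ((U.powersetCard m).card : ℝ)

/-! ### Berge cycles and girth -/

/-- `es` is a Berge cycle in the hypergraph with edge set `H`: a sequence of at least two
distinct edges `e_0, …, e_{ℓ-1}` of `H` together with distinct vertices `v_0, …, v_{ℓ-1}`
such that `v_i ∈ e_i ∩ e_{i+1}` (indices mod `ℓ`). -/
def IsBergeCycleIn (H : Finset (Finset ℕ)) (es : List (Finset ℕ)) : Prop :=
  2 ≤ es.length ∧ es.Nodup ∧ (∀ e ∈ es, e ∈ H) ∧
  ∃ vs : List ℕ, vs.Nodup ∧ vs.length = es.length ∧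
    ∀ i < es.length,
      vs.getD i 0 ∈ es.getD i ∅ ∧ vs.getD i 0 ∈ es.getD ((i + 1) % es.length) ∅

/-- The hypergraph with edge set `H` has girth at least `K`. -/
def GirthAtLeast (H : Finset (Finset ℕ)) (K : ℕ) : Prop :=
  ∀ es : List (Finset ℕ), IsBergeCycleIn H es → K ≤ es.length

/-- The hypergraph with edge set `H` is Berge acyclic. -/
def BergeAcyclic (H : Finset (Finset ℕ)) : Prop :=
  ∀ es : List (Finset ℕ), ¬ IsBergeCycleIn H es

/-! ### Absorbers -/

/-- An absorber in `G` rooted in the `(k-1)`-set `X`: a collection of loose paths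
`P₁ j, P₂ j` (`j < q`) such that for each `i ∈ {1,2}` the paths `Pᵢ j` are pairwise
vertex-disjoint, `V(⋃ P₁ j) = V(⋃ P₂ j) ∪ X`, `X ∩ V(⋃ P₂ j) = ∅`, and `P₁ j` and
`P₂ j` have the same first vertex and the same last vertex. -/
structure Absorber (G : HGraph) (k : ℕ) (X : Finset ℕ) where
  q : ℕ
  P₁ : Fin q → List ℕ
  P₂ : Fin q → List ℕ
  path₁ : ∀ j, G.IsLoosePath k (P₁ j)
  path₂ : ∀ j, G.IsLoosePath k (P₂ j)
  ends_head : ∀ j, (P₁ j).head? = (P₂ j).head?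
  ends_last : ∀ j, (P₁ j).getLast? = (P₂ j).getLast?
  disj₁ : ∀ j j', j ≠ j' → Disjoint (P₁ j).toFinset (P₁ j').toFinset
  disj₂ : ∀ j j', j ≠ j' → Disjoint (P₂ j).toFinset (P₂ j').toFinset
  cover : (Finset.univ.biUnion fun j => (P₁ j).toFinset) =
      (Finset.univ.biUnion fun j => (P₂ j).toFinset) ∪ X
  avoid : Disjoint X (Finset.univ.biUnion fun j => (P₂ j).toFinset)

namespace Absorber

variable {G : HGraph} {k : ℕ} {X : Finset ℕ}

/-- The vertex set of an absorber (the vertices of its passive state). -/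
def verts (A : Absorber G k X) : Finset ℕ :=
  Finset.univ.biUnion fun j => (A.P₂ j).toFinset

/-- The order of an absorber. -/
def order (A : Absorber G k X) : ℕ := A.verts.card

/-- The set of all edges of the paths of an absorber. -/
def edgeSet (A : Absorber G k X) : Finset (Finset ℕ) :=
  (Finset.univ.biUnion fun j => pathEdges k (A.P₁ j)) ∪
    (Finset.univ.biUnion fun j => pathEdges k (A.P₂ j))

/-- The `k`-graph associated to an absorber: its edges are the edges of its paths. -/
def graph (A : Absorber G k X) : HGraph := ⟨A.verts ∪ X, A.edgeSet⟩

/-- An absorber is `K`-sparse if the hypergraph formed by the edges of its paths,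
together with `X` as an additional edge, has girth at least `K`. -/
def KSparse (A : Absorber G k X) (K : ℕ) : Prop :=
  GirthAtLeast (insert X A.edgeSet) K

end Absorber

/-! ### `k`-density -/

/-- `m_k(H) ≤ c`: every subgraph `H'` of `H` with more than `k` vertices satisfies
`(e(H') - 1)/(v(H') - k) ≤ c`. -/
def kDensityLE (H : HGraph) (k : ℕ) (c : ℝ) : Prop :=
  ∀ V' ⊆ H.verts, ∀ E' ⊆ H.edges, (∀ e ∈ E', e ⊆ V') → k < V'.card →
    ((E'.card : ℝ) - 1) / ((V'.card : ℝ) - (k : ℝ)) ≤ c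

/-! ### Rooted copies and blow-ups -/

/-- `G` contains a copy of `R` rooted in `X ⊆ V(R)`. -/
def ContainsRootedCopy (G R : HGraph) (X : Finset ℕ) : Prop :=
  ∃ φ : ℕ → ℕ, Set.InjOn φ (R.verts : Set ℕ) ∧ (∀ x ∈ X, φ x = x) ∧
    (∀ v ∈ R.verts, φ v ∈ G.verts) ∧ (∀ e ∈ R.edges, e.image φ ∈ G.edges)

/-- `H` is (a copy of) the blow-up `R*(m, X)`: each vertex of `R` outside `X` is
replaced by `m` copies, the vertices of `X` are kept, and each edge of `R` is replaced
by the corresponding complete `k`-partite `k`-graph. The map `f` projects `H` to `R`. -/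
def IsBlowup (k : ℕ) (R : HGraph) (X : Finset ℕ) (m : ℕ) (H : HGraph) : Prop :=
  ∃ f : ℕ → ℕ,
    (∀ x ∈ X, (H.verts.filter fun v => f v = x) = {x}) ∧
    (∀ u ∈ R.verts \ X, (H.verts.filter fun v => f v = u).card = m) ∧
    (∀ v ∈ H.verts, f v ∈ R.verts) ∧
    H.edges = (H.verts.powersetCard k).filter fun e => e.image f ∈ R.edges

/-! ### Spread sets and degree-2 vertices in loose cycles -/

/-- The cyclic distance between positions `i` and `j` on a cycle of length `ℓ`. -/
def cyclicDist (ℓ i j : ℕ) : ℕ := min ((i + ℓ - j) % ℓ) ((j + ℓ - i) % ℓ)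

/-- `X` is `K`-spread in the loose cycle with cyclic vertex sequence `vs`: any two
distinct vertices of `X` are at least `K` vertices apart in the cyclic ordering. -/
def KSpread (vs : List ℕ) (X : Finset ℕ) (K : ℕ) : Prop :=
  ∀ i < vs.length, ∀ j < vs.length, i ≠ j →
    vs.getD i 0 ∈ X → vs.getD j 0 ∈ X → K ≤ cyclicDist vs.length i j

/-- `x` has degree `2` in the loose cycle with cyclic vertex sequence `vs`, i.e. `x`
sits at a position divisible by `k-1` (where two consecutive edges meet). -/
def IsDegTwoVert (k : ℕ) (vs : List ℕ) (x : ℕ) : Prop :=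
  ∃ i, i < vs.length ∧ vs.getD i 0 = x ∧ (k - 1) ∣ i


/-! ### Auxiliary lemmas for the dense connection lemma -/


/-- Number of edges containing a fixed set `T` is at most `C(|V\T|, k-|T|)`. -/
lemma card_filter_superset_le (G : HGraph) (k : ℕ) (hG : G.IsUniform k) (T : Finset ℕ) :
    (G.edges.filter fun e => T ⊆ e).card ≤ ((G.verts \ T).card).choose (k - T.card) := by
  classical
  have h1 : (G.edges.filter fun e => T ⊆ e).card ≤
      ((G.verts \ T).powersetCard (k - T.card)).card := by
    apply Finset.card_le_card_of_injOn (fun e => e \ T)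
    · intro e he
      rw [Finset.mem_coe, Finset.mem_filter] at he
      obtain ⟨he, hTe⟩ := he
      obtain ⟨hsub, hcard⟩ := hG e he
      rw [Finset.mem_coe, Finset.mem_powersetCard]
      exact ⟨Finset.sdiff_subset_sdiff hsub le_rfl,
        by rw [Finset.card_sdiff_of_subset hTe, hcard]⟩
    · intro e he e' he' hee
      rw [Finset.coe_filter] at he he'
      simp only [Set.mem_setOf_eq] at he he'
      simp only at hee
      have : e \ T ∪ T = e' \ T ∪ T := by rw [hee]
      rwa [Finset.sdiff_union_of_subset he.2, Finset.sdiff_union_of_subset he'.2] at this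
  rwa [Finset.card_powersetCard] at h1

lemma card_filter_superset_le' (G : HGraph) (k n : ℕ) (hG : G.IsUniform k)
    (hn : G.verts.card = n) (T : Finset ℕ) :
    (G.edges.filter fun e => T ⊆ e).card ≤ n.choose (k - T.card) := by
  refine (card_filter_superset_le G k hG T).trans (Nat.choose_le_choose _ ?_)
  exact le_trans (Finset.card_le_card (Finset.sdiff_subset)) hn.le

/-- Real-valued: `a^(j+1) - b^(j+1) ≤ (j+1) * (a-b) * a^j` for `0 ≤ b ≤ a`. -/
lemma pow_sub_pow_le_real (a b : ℝ) (hb : 0 ≤ b) (hba : b ≤ a) :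
    ∀ j : ℕ, a ^ (j+1) - b ^ (j+1) ≤ (j+1 : ℝ) * (a - b) * a ^ j := by
  intro j
  induction j with
  | zero => simp
  | succ j ih =>
    have ha : 0 ≤ a := le_trans hb hba
    have hbj : b ^ (j+1) ≤ a ^ (j+1) := pow_le_pow_left₀ hb hba _
    have key : a ^ (j+2) - b ^ (j+2) = a * (a ^ (j+1) - b ^ (j+1)) + (a - b) * b ^ (j+1) := by
      ring
    rw [key]
    have h1 : a * (a ^ (j+1) - b ^ (j+1)) ≤ a * ((j+1 : ℝ) * (a - b) * a ^ j) :=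
      mul_le_mul_of_nonneg_left ih ha
    have h2 : (a - b) * b ^ (j+1) ≤ (a - b) * a ^ (j+1) :=
      mul_le_mul_of_nonneg_left hbj (by linarith)
    have : a * ((j+1 : ℝ) * (a - b) * a ^ j) = (j+1 : ℝ) * (a - b) * a ^ (j+1) := by ring
    rw [this] at h1
    calc a * (a ^ (j+1) - b ^ (j+1)) + (a - b) * b ^ (j+1)
        ≤ (j+1 : ℝ) * (a - b) * a ^ (j+1) + (a - b) * a ^ (j+1) := by linarith
      _ = ((j:ℝ)+1+1) * (a - b) * a ^ (j+1) := by ring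
      _ = ((j+1:ℕ)+1 : ℝ) * (a - b) * a ^ (j+1) := by push_cast; ring

/-- Find an edge containing `W` and avoiding `F`. -/
lemma exists_edge_avoiding (G : HGraph) (k d n : ℕ) (γ m : ℝ)
    (hG : G.IsUniform k) (hn : G.verts.card = n)
    (hdeg : G.MinDegAtLeast d m) (hγ : 0 < γ)
    (hm : γ * (((n - d).choose (k - d) : ℕ) : ℝ) ≤ m)
    (W F : Finset ℕ) (hW : W ⊆ G.verts) (hWd : W.card ≤ d)
    (hWF : Disjoint W F)
    (hbig : (F.card : ℝ) * ((n.choose (k - d - 1) : ℕ) : ℝ) < γ * (((n - d).choose (k - d) : ℕ) : ℝ))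
    (hnbig : F.card + d ≤ n) :
    ∃ e ∈ G.edges, W ⊆ e ∧ Disjoint e F := by
  classical
  have hsub : W ⊆ W ∪ (G.verts \ F) := Finset.subset_union_left
  have hcard : d ≤ (W ∪ (G.verts \ F)).card := by
    have h1 : G.verts.card - F.card ≤ (G.verts \ F).card := Finset.le_card_sdiff F G.verts
    have h2 : (G.verts \ F).card ≤ (W ∪ (G.verts \ F)).card :=
      Finset.card_le_card Finset.subset_union_right
    omega
  obtain ⟨S, hWS, hSsub, hScard⟩ := Finset.exists_subsuperset_card_eq hsub hWd hcard
  have hSv : S ⊆ G.verts := by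
    intro x hx
    rcases Finset.mem_union.mp (hSsub hx) with h | h
    · exact hW h
    · exact (Finset.mem_sdiff.mp h).1
  have hSF : Disjoint S F := by
    rw [Finset.disjoint_left]
    intro x hx hxF
    rcases Finset.mem_union.mp (hSsub hx) with h | h
    · exact (Finset.disjoint_left.mp hWF) h hxF
    · exact (Finset.mem_sdiff.mp h).2 hxF
  have hdegS : m ≤ (G.deg S : ℝ) := hdeg S hSv hScard
  set Eset := G.edges.filter (fun e => S ⊆ e) with hEset
  set Bad := Eset.filter (fun e => ¬ Disjoint e F) with hBad
  have hBadsub : Bad ⊆ F.biUnion (fun f => G.edges.filter (fun e => insert f S ⊆ e)) := by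
    intro e he
    rw [hBad, Finset.mem_filter] at he
    obtain ⟨heE, hnd⟩ := he
    rw [hEset, Finset.mem_filter] at heE
    rw [Finset.not_disjoint_iff] at hnd
    obtain ⟨f, hfe, hfF⟩ := hnd
    rw [Finset.mem_biUnion]
    exact ⟨f, hfF, by rw [Finset.mem_filter]; exact ⟨heE.1, Finset.insert_subset hfe heE.2⟩⟩
  have hone : ∀ f ∈ F, (G.edges.filter (fun e => insert f S ⊆ e)).card ≤ n.choose (k - d - 1) := by
    intro f hfF
    have hfS : f ∉ S := Finset.disjoint_right.mp hSF hfF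
    have := card_filter_superset_le' G k n hG hn (insert f S)
    rwa [Finset.card_insert_of_notMem hfS, hScard] at this
  have hBadcard : Bad.card ≤ F.card * (n.choose (k - d - 1)) := by
    refine le_trans (Finset.card_le_card hBadsub) ?_
    refine le_trans Finset.card_biUnion_le ?_
    calc ∑ f ∈ F, (G.edges.filter (fun e => insert f S ⊆ e)).card
        ≤ ∑ _f ∈ F, n.choose (k - d - 1) := Finset.sum_le_sum hone
      _ = F.card * (n.choose (k - d - 1)) := by rw [Finset.sum_const, smul_eq_mul]
  have hBadlt : Bad.card < Eset.card := by
    have h1 : (Bad.card : ℝ) < (Eset.card : ℝ) := by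
      calc (Bad.card : ℝ) ≤ (F.card : ℝ) * ((n.choose (k - d - 1) : ℕ) : ℝ) := by
            exact_mod_cast Nat.cast_le.mpr hBadcard
        _ < γ * (((n - d).choose (k - d) : ℕ) : ℝ) := hbig
        _ ≤ m := hm
        _ ≤ (G.deg S : ℝ) := hdegS
        _ = (Eset.card : ℝ) := rfl
    exact_mod_cast h1
  have hne : (Eset \ Bad).Nonempty := by
    rw [← Finset.card_pos]
    have := Finset.card_le_card (Finset.filter_subset (fun e => ¬ Disjoint e F) Eset)
    have hsd : (Eset \ Bad).card = Eset.card - Bad.card := Finset.card_sdiff_of_subset (Finset.filter_subset _ _)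
    omega
  obtain ⟨e, he⟩ := hne
  rw [Finset.mem_sdiff] at he
  obtain ⟨heE, heB⟩ := he
  rw [hEset, Finset.mem_filter] at heE
  refine ⟨e, heE.1, le_trans hWS heE.2, ?_⟩
  by_contra hnd
  exact heB (by rw [hBad, Finset.mem_filter]; exact ⟨by rw [hEset, Finset.mem_filter]; exact heE, hnd⟩)

/-- Eventually, `c * C(n, j-1) < γ * C(n-d, j)`. -/
lemma eventually_choose_lt (j d : ℕ) (hj : 1 ≤ j) (c γ : ℝ) (hc : 0 ≤ c) (hγ : 0 < γ) :
    ∃ n₀ : ℕ, ∀ n : ℕ, n₀ ≤ n → c * ((n.choose (j - 1) : ℕ) : ℝ) < γ * (((n - d).choose j : ℕ) : ℝ) := by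
  obtain ⟨N, hN⟩ := exists_nat_gt ((c * 2 ^ j * (j.factorial) + 1) / γ)
  refine ⟨max (2 * (d + j)) (N + 1), fun n hn => ?_⟩
  have hn1 : 2 * (d + j) ≤ n := le_trans (le_max_left _ _) hn
  have hn2 : N + 1 ≤ n := le_trans (le_max_right _ _) hn
  have hnpos : 0 < n := by omega
  -- lower bound the RHS binomial
  have hM : n ≤ 2 * ((n - d) + 1 - j) := by omega
  have hlow : ((n : ℝ)) ^ j / (2 ^ j * (j.factorial)) ≤ (((n - d).choose j : ℕ) : ℝ) := by
    have h1 : ((((n - d) + 1 - j : ℕ)) ^ j : ℝ) / (j.factorial) ≤ (((n - d).choose j : ℕ) : ℝ) := by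
      exact_mod_cast Nat.pow_le_choose j (n - d)
    refine le_trans ?_ h1
    rw [div_le_div_iff₀ (by positivity) (by exact_mod_cast Nat.cast_pos.mpr j.factorial_pos)]
    have h2 : ((n : ℝ)) ≤ 2 * ((((n - d) + 1 - j : ℕ)) : ℝ) := by exact_mod_cast hM
    have h3 : ((n : ℝ)) ^ j ≤ (2 * ((((n - d) + 1 - j : ℕ)) : ℝ)) ^ j :=
      pow_le_pow_left₀ (by positivity) h2 j
    calc (n:ℝ) ^ j * (j.factorial : ℝ)
        ≤ (2 * ((((n - d) + 1 - j : ℕ)) : ℝ)) ^ j * (j.factorial : ℝ) := by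
          exact mul_le_mul_of_nonneg_right h3 (by positivity)
      _ = ((((n - d) + 1 - j : ℕ)) : ℝ) ^ j * ((2:ℝ) ^ j * (j.factorial : ℝ)) := by ring
  -- upper bound the LHS binomial
  have hup : ((n.choose (j - 1) : ℕ) : ℝ) ≤ (n : ℝ) ^ (j - 1) := by
    exact_mod_cast Nat.choose_le_pow n (j - 1)
  have hnn : ((n:ℝ)) ^ j = (n : ℝ) ^ (j - 1) * n := by
    conv_lhs => rw [show j = (j - 1) + 1 by omega]
    rw [pow_succ]
  have hkey : c * (2:ℝ)^j * (j.factorial) + 1 ≤ γ * n := by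
    rw [div_lt_iff₀ hγ] at hN
    have : (N : ℝ) + 1 ≤ (n : ℝ) := by exact_mod_cast hn2
    nlinarith [hγ.le]
  have hpow_pos : (0:ℝ) < (n : ℝ) ^ (j - 1) := by positivity
  calc c * ((n.choose (j - 1) : ℕ) : ℝ) ≤ c * ((n : ℝ) ^ (j - 1)) :=
        mul_le_mul_of_nonneg_left hup hc
    _ < (γ * n / (2 ^ j * (j.factorial))) * ((n : ℝ) ^ (j - 1)) := by
        have hfac : (0:ℝ) < 2 ^ j * (j.factorial) := by positivity
        have : c < γ * n / (2 ^ j * (j.factorial)) := by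
          rw [lt_div_iff₀ hfac]; nlinarith
        exact mul_lt_mul_of_pos_right this hpow_pos
    _ = γ * ((n:ℝ) ^ j / (2 ^ j * (j.factorial))) := by rw [hnn]; ring
    _ ≤ γ * (((n - d).choose j : ℕ) : ℝ) := mul_le_mul_of_nonneg_left hlow hγ.le


lemma looseHamProperty_one (k d : ℕ) (hd : 1 ≤ d) (hdk : d < k) :
    LooseHamProperty k d 1 := by
  intro γ hγ
  refine ⟨k, fun n hn _ G hG hcard hdeg => ?_⟩
  exfalso
  have hdn : d ≤ G.verts.card := by omega
  obtain ⟨S, hSsub, hScard⟩ := Finset.exists_subset_card_eq hdn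
  have h1 := hdeg S hSsub hScard
  have h2 : (G.deg S : ℝ) ≤ (((n - d).choose (k - d) : ℕ) : ℝ) := by
    have := card_filter_superset_le G k hG S
    have hc : (G.verts \ S).card = n - d := by
      rw [Finset.card_sdiff_of_subset hSsub, hcard, hScard]
    rw [hc, hScard] at this
    exact_mod_cast this
  have hpos : (0:ℝ) < (((n - d).choose (k - d) : ℕ) : ℝ) := by
    have : 0 < (n - d).choose (k - d) := Nat.choose_pos (by omega)
    exact_mod_cast this
  nlinarith

lemma muD_set_nonempty (k d : ℕ) (hd : 1 ≤ d) (hdk : d < k) :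
    Set.Nonempty {μ : ℝ | μ ∈ Set.Icc (0 : ℝ) 1 ∧ LooseHamProperty k d μ} :=
  ⟨1, ⟨⟨zero_le_one, le_rfl⟩, looseHamProperty_one k d hd hdk⟩⟩

lemma muD_nonneg (k d : ℕ) (hd : 1 ≤ d) (hdk : d < k) : 0 ≤ muD k d :=
  le_csInf (muD_set_nonempty k d hd hdk) (fun μ hμ => hμ.1.1)

/-- The construction `{e : |e ∩ B| ≤ 1}` with `|B| = m + 1` has no loose Hamilton cycle. -/
lemma construction_no_ham (k m : ℕ) (hk : 3 ≤ k) (hm : 0 < m) :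
    ¬ (graphOfEdges ((k-1)*m)
        ((kSets ((k-1)*m) k).filter fun e => (e ∩ Finset.range (m+1)).card ≤ 1)).HasLooseHamCycle k := by
  classical
  set n := (k-1)*m with hner
  rintro ⟨vs, ⟨⟨hnodup, hlen3, hdvd⟩, hedges⟩, hspan⟩
  have hmn : m + 1 ≤ n := by
    have : 2*m ≤ (k-1)*m := Nat.mul_le_mul_right m (by omega)
    omega
  have hlen : vs.length = n := by
    have h1 : vs.toFinset.card = vs.length := List.toFinset_card_of_nodup hnodup
    rw [hspan] at h1
    simpa [graphOfEdges] using h1.symm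
  have hnpos : 0 < n := by omega
  -- each element of range (m+1) yields a cycle edge index
  have key : ∀ β ∈ Finset.range (m+1), (vs.idxOf β)/(k-1) < m ∧
      β ∈ cycleEdge k vs ((vs.idxOf β)/(k-1)) := by
    intro β hβ
    have hβv : β ∈ vs := by
      rw [← List.mem_toFinset, hspan]
      simp only [graphOfEdges]
      exact Finset.mem_of_subset (by simpa using Finset.range_subset_range.mpr hmn) hβ
    have hp : vs.idxOf β < vs.length := List.idxOf_lt_length_iff.mpr hβv
    set p := vs.idxOf β with hpdef
    have hdiv : p / (k-1) < m := by
      rw [Nat.div_lt_iff_lt_mul (by omega : 0 < k - 1)]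
      calc p < n := by omega
        _ = m * (k-1) := by rw [hner]; ring
    refine ⟨hdiv, ?_⟩
    unfold cycleEdge
    rw [List.mem_toFinset, List.mem_map]
    have hmod : p % (k-1) < k - 1 := Nat.mod_lt p (by omega : 0 < k - 1)
    refine ⟨p % (k-1), by rw [List.mem_range]; omega, ?_⟩
    have hsum : (p/(k-1)) * (k-1) + p % (k-1) = p := by
      rw [mul_comm]; exact Nat.div_add_mod p (k-1)
    rw [hsum]
    rw [hlen, Nat.mod_eq_of_lt (by omega)]
    rw [List.getD_eq_getElem?_getD, List.getElem?_eq_getElem (by omega)]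
    simp only [Option.getD_some]
    exact List.getElem_idxOf (by omega)
  have hinj : Set.InjOn (fun β => (vs.idxOf β)/(k-1)) (Finset.range (m+1)) := by
    intro β hβ β' hβ' heq
    simp only at heq
    simp only [Finset.coe_insert, Finset.mem_coe] at hβ hβ'
    by_contra hne
    obtain ⟨hd1, hmem1⟩ := key β (by exact_mod_cast hβ)
    obtain ⟨hd2, hmem2⟩ := key β' (by exact_mod_cast hβ')
    set i := (vs.idxOf β)/(k-1) with hidef
    rw [← heq] at hmem2
    have hi : i < vs.length / (k-1) := by
      rw [hlen, hner, Nat.mul_div_cancel_left m (by omega : 0 < k-1)] at *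
      omega
    have hedge := hedges i hi
    simp only [graphOfEdges, Finset.mem_filter] at hedge
    have hsub2 : ({β, β'} : Finset ℕ) ⊆ (cycleEdge k vs i) ∩ Finset.range (m+1) := by
      intro y hy
      rcases Finset.mem_insert.mp hy with rfl | hy
      · exact Finset.mem_inter.mpr ⟨hmem1, by exact_mod_cast hβ⟩
      · rw [Finset.mem_singleton] at hy
        subst hy
        exact Finset.mem_inter.mpr ⟨hmem2, by exact_mod_cast hβ'⟩
    have h2 : 2 ≤ ((cycleEdge k vs i) ∩ Finset.range (m+1)).card := by
      calc 2 = ({β, β'} : Finset ℕ).card := by rw [Finset.card_insert_of_notMem (by simpa using hne), Finset.card_singleton]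
        _ ≤ _ := Finset.card_le_card hsub2
    omega
  have hcard := Finset.card_le_card_of_injOn (fun β => (vs.idxOf β)/(k-1))
    (fun β hβ => by
      exact Finset.mem_coe.mpr (Finset.mem_range.mpr (key β hβ).1)) hinj
  rw [Finset.card_range, Finset.card_range] at hcard
  omega


set_option maxHeartbeats 1000000 in
lemma muD_one_ge (k : ℕ) (hk : 3 ≤ k) : ((1:ℝ)/2)^(k-1) ≤ muD k 1 := by
  classical
  refine le_csInf (muD_set_nonempty k 1 le_rfl (by omega)) ?_
  rintro μ ⟨⟨hμ0, hμ1⟩, hLHP⟩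
  by_contra hlt
  push_neg at hlt
  set μs : ℝ := ((1:ℝ)/2)^(k-1) with hμs
  set γ : ℝ := (μs - μ)/2 with hγdef
  have hγ : 0 < γ := by rw [hγdef]; linarith
  have hμγ : μ + γ = μs - γ := by rw [hγdef]; ring
  have hμγ0 : 0 ≤ μs - γ := by rw [← hμγ]; linarith
  obtain ⟨n₀, hP⟩ := hLHP γ hγ
  obtain ⟨N, hN⟩ := exists_nat_gt ((k:ℝ)^2/γ)
  set m : ℕ := max (max n₀ (N+1)) (k+2) with hmdef
  set n : ℕ := (k-1)*m with hndef
  have hm0 : 0 < m := by omega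
  have hmn : m ≤ n := by
    rw [hndef]; exact Nat.le_mul_of_pos_left m (by omega)
  have h2mn : 2*m ≤ n := by
    rw [hndef]; exact Nat.mul_le_mul_right m (by omega)
  have hkm : k + 2 ≤ m := le_max_right _ _
  have hγn : (k:ℝ)^2 < γ * n := by
    have h1 : ((N:ℝ) + 1) ≤ (n:ℝ) := by
      have : N + 1 ≤ n := le_trans (le_trans (le_max_right _ _) (le_max_left _ _)) hmn
      exact_mod_cast this
    rw [div_lt_iff₀ hγ] at hN
    nlinarith
  set G : HGraph := graphOfEdges n ((kSets n k).filter fun e => (e ∩ Finset.range (m+1)).card ≤ 1)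
    with hGdef
  have huni : G.IsUniform k := by
    intro e he
    rw [hGdef] at he
    simp only [graphOfEdges, Finset.mem_filter, kSets, Finset.mem_powersetCard] at he
    exact ⟨he.1.1, he.1.2⟩
  have hcard : G.verts.card = n := by simp [hGdef, graphOfEdges]
  have hmindeg : G.MinDegAtLeast 1 ((μ + γ) * ((n - 1).choose (k - 1) : ℝ)) := by
    intro S hS hS1
    obtain ⟨x, rfl⟩ := Finset.card_eq_one.mp hS1
    have hx : x ∈ Finset.range n := by
      simpa [hGdef, graphOfEdges] using hS (Finset.mem_singleton_self x)
    set A : Finset ℕ := (Finset.range n \ Finset.range (m+1)) \ {x} with hAdef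
    have hAcard : n - m - 2 ≤ A.card := by
      have h1 : (Finset.range n \ Finset.range (m+1)).card = n - (m+1) := by
        rw [Finset.card_sdiff_of_subset (Finset.range_subset_range.mpr (by omega)), Finset.card_range,
          Finset.card_range]
      have h2 : (Finset.range n \ Finset.range (m+1)).card - 1 ≤ A.card := by
        rw [hAdef]
        have := Finset.le_card_sdiff ({x} : Finset ℕ) (Finset.range n \ Finset.range (m+1))
        simpa using this
      omega
    have hdegl : (n - m - 2).choose (k-1) ≤ G.deg {x} := by
      have hinj : ∀ s ∈ A.powersetCard (k-1), insert x s ∈ G.edges.filter fun e => {x} ⊆ e := by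
        intro s hs
        rw [Finset.mem_powersetCard] at hs
        obtain ⟨hsA, hscard⟩ := hs
        have hxs : x ∉ s := fun hxx => by
          have := hsA hxx
          rw [hAdef] at this
          simp at this
        have hsub : insert x s ⊆ Finset.range n := by
          refine Finset.insert_subset hx ?_
          intro y hy
          have := hsA hy
          rw [hAdef] at this
          simp only [Finset.mem_sdiff] at this
          exact this.1.1
        rw [Finset.mem_filter]
        constructor
        · rw [hGdef]
          simp only [graphOfEdges, Finset.mem_filter, kSets, Finset.mem_powersetCard]
          refine ⟨⟨hsub, ?_⟩, ?_⟩
          · rw [Finset.card_insert_of_notMem hxs, hscard]; omega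
          · have hint : (insert x s) ∩ Finset.range (m+1) ⊆ {x} := by
              intro y hy
              rw [Finset.mem_inter, Finset.mem_insert] at hy
              obtain ⟨h1 | h1, h2⟩ := hy
              · simp [h1]
              · exfalso
                have := hsA h1
                rw [hAdef] at this
                simp only [Finset.mem_sdiff, Finset.mem_range] at this
                rw [Finset.mem_range] at h2
                omega
            calc ((insert x s) ∩ Finset.range (m+1)).card ≤ ({x} : Finset ℕ).card :=
              Finset.card_le_card hint
              _ = 1 := Finset.card_singleton x
        · simp
      have hinjOn : Set.InjOn (fun s => insert x s) ((A.powersetCard (k-1)) : Set (Finset ℕ)) := by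
        intro s hs s' hs' heq
        simp only at heq
        rw [Finset.mem_coe, Finset.mem_powersetCard] at hs hs'
        have hxs : x ∉ s := fun hxx => by have := hs.1 hxx; rw [hAdef] at this; simp at this
        have hxs' : x ∉ s' := fun hxx => by have := hs'.1 hxx; rw [hAdef] at this; simp at this
        rw [← Finset.erase_insert hxs, ← Finset.erase_insert hxs', heq]
      have := Finset.card_le_card_of_injOn (fun s => insert x s) hinj hinjOn
      rw [Finset.card_powersetCard] at this
      calc (n - m - 2).choose (k-1) ≤ (A.card).choose (k-1) := Nat.choose_le_choose _ hAcard
        _ ≤ _ := this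
    -- real-number estimate
    have hfacpos : (0:ℝ) < ((k-1).factorial : ℝ) := by exact_mod_cast (k-1).factorial_pos
    have hub : ((n - 1).choose (k - 1) : ℝ) ≤ (n:ℝ)^(k-1) / ((k-1).factorial : ℝ) := by
      calc ((n - 1).choose (k - 1) : ℝ) ≤ ((n-1 : ℕ) : ℝ)^(k-1) / ((k-1).factorial : ℝ) :=
            Nat.choose_le_pow_div (k-1) (n-1)
        _ ≤ (n:ℝ)^(k-1) / ((k-1).factorial : ℝ) := by
            gcongr
            exact_mod_cast Nat.sub_le n 1
    have hlb : ((n - m - k : ℕ) : ℝ)^(k-1) / ((k-1).factorial : ℝ) ≤ ((n - m - 2).choose (k-1) : ℝ) := by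
      have h1 := Nat.pow_le_choose (α := ℝ) (k-1) (n - m - 2)
      have h2 : n - m - 2 + 1 - (k-1) = n - m - k := by omega
      rw [h2] at h1
      exact_mod_cast h1
    have hcast : ((n - m - k : ℕ) : ℝ) = (n:ℝ) - m - k := by
      have h1 : n - m - k = n - (m + k) := by omega
      rw [h1, Nat.cast_sub (by omega : m + k ≤ n)]
      push_cast
      ring
    have hkey : (μs - γ) * ((n:ℝ))^(k-1) ≤ ((n:ℝ) - m - k)^(k-1) := by
      set a : ℝ := (n:ℝ)/2 with hadef
      set b : ℝ := (n:ℝ) - m - k with hbdef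
      have hb0 : (0:ℝ) ≤ b := by
        rw [hbdef]
        have : ((m + k : ℕ) : ℝ) ≤ (n : ℕ) := by exact_mod_cast (by omega : m + k ≤ n)
        push_cast at this
        linarith
      have hμsa : μs * (n:ℝ)^(k-1) = a^(k-1) := by
        rw [hμs, hadef, ← mul_pow, one_div, inv_mul_eq_div]
      have hexp : (μs - γ) * (n:ℝ)^(k-1) = μs * (n:ℝ)^(k-1) - γ * (n:ℝ)^(k-1) := by ring
      rcases le_or_gt a b with hab | hba
      · have h1 : a^(k-1) ≤ b^(k-1) := pow_le_pow_left₀ (by rw [hadef]; positivity) hab _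
        have h2 : 0 ≤ γ * (n:ℝ)^(k-1) := by positivity
        linarith [hμsa]
      · have hm2 : (m:ℝ) ≤ (n:ℝ)/2 := by
          have : ((2*m : ℕ) : ℝ) ≤ (n : ℕ) := by exact_mod_cast h2mn
          push_cast at this
          linarith
        have habk : a - b ≤ k := by rw [hadef, hbdef]; push_cast; linarith
        have hk1 : k - 1 = (k-2)+1 := by omega
        have hps := pow_sub_pow_le_real a b hb0 hba.le (k-2)
        have han : a ≤ (n:ℝ) := by rw [hadef]; linarith [Nat.cast_nonneg (α := ℝ) n]
        have hak : a^(k-2) ≤ (n:ℝ)^(k-2) := pow_le_pow_left₀ (by rw [hadef]; positivity) han _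
        have hgn : ((k:ℝ)-1) * k * (n:ℝ)^(k-2) ≤ γ * (n:ℝ)^(k-1) := by
          have hnn : (n:ℝ)^(k-1) = (n:ℝ) * (n:ℝ)^(k-2) := by
            rw [hk1, pow_succ]
            ring
          rw [hnn]
          have hp2 : (0:ℝ) ≤ (n:ℝ)^(k-2) := by positivity
          have h3 : ((k:ℝ)-1) * k ≤ (k:ℝ)^2 := by nlinarith [Nat.cast_nonneg (α := ℝ) k]
          nlinarith
        have h4 : a^(k-1) - b^(k-1) ≤ ((k:ℝ)-1) * k * (n:ℝ)^(k-2) := by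
          rw [hk1]
          have hcast2 : ((k-2:ℕ):ℝ) + 1 = (k:ℝ) - 1 := by
            rw [Nat.cast_sub (by omega : 2 ≤ k)]; push_cast; ring
          calc a^((k-2)+1) - b^((k-2)+1) ≤ (((k-2:ℕ):ℝ)+1) * (a - b) * a^(k-2) := hps
            _ ≤ (((k-2:ℕ):ℝ)+1) * k * (n:ℝ)^(k-2) := by
                have hnn0 : (0:ℝ) ≤ ((k-2:ℕ):ℝ)+1 := by positivity
                have hpa : (0:ℝ) ≤ a^(k-2) := by rw [hadef]; positivity
                have h5 : (a - b) * a^(k-2) ≤ (k:ℝ) * (n:ℝ)^(k-2) :=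
                  mul_le_mul habk hak hpa (by positivity : (0:ℝ) ≤ (k:ℝ))
                calc (((k-2:ℕ):ℝ)+1) * (a - b) * a^(k-2)
                    = (((k-2:ℕ):ℝ)+1) * ((a - b) * a^(k-2)) := by ring
                  _ ≤ (((k-2:ℕ):ℝ)+1) * ((k:ℝ) * (n:ℝ)^(k-2)) :=
                      mul_le_mul_of_nonneg_left h5 hnn0
                  _ = (((k-2:ℕ):ℝ)+1) * k * (n:ℝ)^(k-2) := by ring
            _ = ((k:ℝ)-1) * k * (n:ℝ)^(k-2) := by rw [hcast2]
        linarith [hμsa]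
    -- put it together
    have hdeg1 : (μ + γ) * ((n - 1).choose (k - 1) : ℝ) ≤ ((n - m - 2).choose (k-1) : ℝ) := by
      rw [hμγ]
      calc (μs - γ) * ((n - 1).choose (k - 1) : ℝ)
          ≤ (μs - γ) * ((n:ℝ)^(k-1) / ((k-1).factorial : ℝ)) :=
            mul_le_mul_of_nonneg_left hub hμγ0
        _ = ((μs - γ) * (n:ℝ)^(k-1)) / ((k-1).factorial : ℝ) := by ring
        _ ≤ ((n:ℝ) - m - k)^(k-1) / ((k-1).factorial : ℝ) := by gcongr
        _ = ((n - m - k : ℕ) : ℝ)^(k-1) / ((k-1).factorial : ℝ) := by rw [hcast]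
        _ ≤ ((n - m - 2).choose (k-1) : ℝ) := hlb
    calc (μ + γ) * ((n - 1).choose (k - 1) : ℝ) ≤ ((n - m - 2).choose (k-1) : ℝ) := hdeg1
      _ ≤ (G.deg {x} : ℝ) := by exact_mod_cast hdegl
  have hn0 : n₀ ≤ n := le_trans (le_trans (le_max_left _ _) (le_max_left _ _)) hmn
  have hHam := hP n hn0 ⟨m, rfl⟩ G huni hcard hmindeg
  exact construction_no_ham k m hk hm0 hHam


/-- The set of "robust co-neighbors" of `w` avoiding `F`. -/
noncomputable def goodSet (G : HGraph) (k n : ℕ) (w : ℕ) (F : Finset ℕ) : Finset ℕ :=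
  (G.verts \ insert w F).filter fun x =>
    k * (n.choose (k-3)) < (G.edges.filter fun e => w ∈ e ∧ x ∈ e ∧ Disjoint e F).card

set_option maxHeartbeats 1000000 in
/-- The robust neighborhood of any vertex has size `> n/2 + 8k`. -/
lemma goodSet_large (G : HGraph) (k n : ℕ) (γ : ℝ) (hk : 3 ≤ k)
    (hG : G.IsUniform k) (hn : G.verts.card = n) (hγ : 0 < γ)
    (w : ℕ) (F : Finset ℕ) (hwF : w ∉ F) (hF : F.card ≤ 6*k)
    (hdegw : (((1:ℝ)/2)^(k-1) + γ) * (((n-1).choose (k-1) : ℕ) : ℝ) ≤ (G.deg {w} : ℝ))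
    (hn1 : 16*k ≤ n)
    (hn2 : (2:ℝ)^(k-1) * (9*(k:ℝ)*k + 7*k*((k-1).factorial : ℝ) + 1) ≤ γ * n) :
    (n:ℝ)/2 + 8*(k:ℝ) < ((goodSet G k n w F).card : ℝ) := by
  classical
  set K := k * (n.choose (k-3)) with hKdef
  set Gd := goodSet G k n w F with hGddef
  set E0 := G.edges.filter (fun e => ({w} : Finset ℕ) ⊆ e) with hE0def
  set E1 := G.edges.filter (fun e => w ∈ e ∧ Disjoint e F) with hE1def
  set E2 := E1.filter (fun e => e \ {w} ⊆ Gd) with hE2def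
  have hdeg0 : G.deg {w} = E0.card := rfl
  -- step 1
  have step1 : E0.card ≤ E1.card + 6*k * (n.choose (k-2)) := by
    have hsplit : E0 ⊆ E1 ∪ (F.biUnion fun f => G.edges.filter fun e => ({w,f} : Finset ℕ) ⊆ e) := by
      intro e he
      rw [hE0def, Finset.mem_filter, Finset.singleton_subset_iff] at he
      by_cases hd : Disjoint e F
      · exact Finset.mem_union_left _ (by rw [hE1def, Finset.mem_filter]; exact ⟨he.1, he.2, hd⟩)
      · rw [Finset.not_disjoint_iff] at hd
        obtain ⟨f, hfe, hfF⟩ := hd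
        refine Finset.mem_union_right _ (Finset.mem_biUnion.mpr ⟨f, hfF, ?_⟩)
        rw [Finset.mem_filter]
        exact ⟨he.1, Finset.insert_subset he.2 (Finset.singleton_subset_iff.mpr hfe)⟩
    calc E0.card ≤ (E1 ∪ (F.biUnion fun f => G.edges.filter fun e => ({w,f} : Finset ℕ) ⊆ e)).card :=
          Finset.card_le_card hsplit
      _ ≤ E1.card + (F.biUnion fun f => G.edges.filter fun e => ({w,f} : Finset ℕ) ⊆ e).card :=
          Finset.card_union_le _ _
      _ ≤ E1.card + 6*k * (n.choose (k-2)) := by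
          gcongr
          refine le_trans Finset.card_biUnion_le ?_
          have hone : ∀ f ∈ F, (G.edges.filter fun e => ({w,f} : Finset ℕ) ⊆ e).card ≤
              n.choose (k-2) := by
            intro f hfF
            have hwf : w ≠ f := fun h => hwF (h ▸ hfF)
            have := card_filter_superset_le' G k n hG hn {w, f}
            rwa [Finset.card_insert_of_notMem (by simpa using hwf), Finset.card_singleton] at this
          calc ∑ f ∈ F, (G.edges.filter fun e => ({w,f} : Finset ℕ) ⊆ e).card
              ≤ ∑ _f ∈ F, n.choose (k-2) := Finset.sum_le_sum hone
            _ = F.card * n.choose (k-2) := by rw [Finset.sum_const, smul_eq_mul]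
            _ ≤ 6*k * n.choose (k-2) := Nat.mul_le_mul_right _ hF
  -- step 2
  have step2 : E1.card ≤ E2.card + n * K := by
    set BadV := G.verts.filter (fun x =>
      (G.edges.filter fun e => w ∈ e ∧ x ∈ e ∧ Disjoint e F).card ≤ K) with hBadV
    have hsplit : E1 ⊆ E2 ∪ (BadV.biUnion fun x =>
        G.edges.filter fun e => w ∈ e ∧ x ∈ e ∧ Disjoint e F) := by
      intro e he
      by_cases hgood : e \ {w} ⊆ Gd
      · exact Finset.mem_union_left _ (by rw [hE2def, Finset.mem_filter]; exact ⟨he, hgood⟩)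
      · rw [Finset.not_subset] at hgood
        obtain ⟨x, hxe, hxG⟩ := hgood
        rw [Finset.mem_sdiff, Finset.mem_singleton] at hxe
        obtain ⟨hxe, hxw⟩ := hxe
        rw [hE1def, Finset.mem_filter] at he
        obtain ⟨heE, hwe, hdF⟩ := he
        have hxv : x ∈ G.verts := (hG e heE).1 hxe
        have hxF : x ∉ F := Finset.disjoint_left.mp hdF hxe
        have hxcnt : (G.edges.filter fun e => w ∈ e ∧ x ∈ e ∧ Disjoint e F).card ≤ K := by
          by_contra hc
          push_neg at hc
          exact hxG (by
            rw [hGddef]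
            unfold goodSet
            rw [Finset.mem_filter, Finset.mem_sdiff, Finset.mem_insert]
            exact ⟨⟨hxv, fun h => by tauto⟩, hc⟩)
        refine Finset.mem_union_right _ (Finset.mem_biUnion.mpr ⟨x, ?_, ?_⟩)
        · rw [hBadV, Finset.mem_filter]; exact ⟨hxv, hxcnt⟩
        · rw [Finset.mem_filter]; exact ⟨heE, hwe, hxe, hdF⟩
    calc E1.card ≤ _ := Finset.card_le_card hsplit
      _ ≤ E2.card + (BadV.biUnion fun x =>
          G.edges.filter fun e => w ∈ e ∧ x ∈ e ∧ Disjoint e F).card := Finset.card_union_le _ _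
      _ ≤ E2.card + n * K := by
          gcongr
          refine le_trans Finset.card_biUnion_le ?_
          calc ∑ x ∈ BadV, (G.edges.filter fun e => w ∈ e ∧ x ∈ e ∧ Disjoint e F).card
              ≤ ∑ _x ∈ BadV, K := Finset.sum_le_sum (fun x hx => by
                rw [hBadV, Finset.mem_filter] at hx; exact hx.2)
            _ = BadV.card * K := by rw [Finset.sum_const, smul_eq_mul]
            _ ≤ n * K := by
                refine Nat.mul_le_mul_right _ ?_
                rw [hBadV, ← hn]
                exact Finset.card_le_card (Finset.filter_subset _ _)
  -- step 3
  have step3 : E2.card ≤ (Gd.card).choose (k-1) := by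
    have h1 : E2.card ≤ (Gd.powersetCard (k-1)).card := by
      apply Finset.card_le_card_of_injOn (fun e => e \ {w})
      · intro e he
        rw [Finset.mem_coe, hE2def, Finset.mem_filter] at he
        obtain ⟨he1, hsub⟩ := he
        rw [hE1def, Finset.mem_filter] at he1
        rw [Finset.mem_coe, Finset.mem_powersetCard]
        refine ⟨hsub, ?_⟩
        rw [Finset.card_sdiff_of_subset (Finset.singleton_subset_iff.mpr he1.2.1), (hG e he1.1).2,
          Finset.card_singleton]
      · intro e he e' he' heq
        simp only at heq
        rw [Finset.mem_coe, hE2def, Finset.mem_filter, hE1def, Finset.mem_filter] at he he'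
        have h2 : e \ {w} ∪ {w} = e' \ {w} ∪ {w} := by rw [heq]
        rwa [Finset.sdiff_union_of_subset (Finset.singleton_subset_iff.mpr he.1.2.1),
          Finset.sdiff_union_of_subset (Finset.singleton_subset_iff.mpr he'.1.2.1)] at h2
    rwa [Finset.card_powersetCard] at h1
  -- combine and estimate
  by_contra hcon
  push_neg at hcon
  set g := Gd.card with hgdef
  have hchain : (((1:ℝ)/2)^(k-1) + γ) * (((n-1).choose (k-1) : ℕ) : ℝ) ≤
      ((g.choose (k-1) : ℕ) : ℝ) + 6*(k:ℝ) * ((n.choose (k-2) : ℕ) : ℝ)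
        + (n:ℝ) * ((K : ℕ) : ℝ) := by
    have h1 : E0.card ≤ g.choose (k-1) + 6*k*(n.choose (k-2)) + n*K := by omega
    calc (((1:ℝ)/2)^(k-1) + γ) * (((n-1).choose (k-1) : ℕ) : ℝ) ≤ (G.deg {w} : ℝ) := hdegw
      _ = (E0.card : ℝ) := by rw [hdeg0]
      _ ≤ _ := by exact_mod_cast Nat.cast_le.mpr h1
  have hfacpos : (0:ℝ) < ((k-1).factorial : ℝ) := by exact_mod_cast (k-1).factorial_pos
  -- real bounds
  have hub2 : ((n.choose (k-2) : ℕ) : ℝ) ≤ (n:ℝ)^(k-2) := by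
    exact_mod_cast Nat.choose_le_pow n (k-2)
  have hub3 : ((K : ℕ) : ℝ) ≤ (k:ℝ) * (n:ℝ)^(k-3) := by
    rw [hKdef]
    push_cast
    have : ((n.choose (k-3) : ℕ) : ℝ) ≤ (n:ℝ)^(k-3) := by exact_mod_cast Nat.choose_le_pow n (k-3)
    nlinarith [Nat.cast_nonneg (α := ℝ) k]
  have hlb : ((n-(k-1) : ℕ) : ℝ)^(k-1) / ((k-1).factorial : ℝ) ≤ (((n-1).choose (k-1) : ℕ) : ℝ) := by
    have h1 := Nat.pow_le_choose (α := ℝ) (k-1) (n - 1)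
    have h2 : n - 1 + 1 - (k-1) = n - (k-1) := by omega
    rw [h2] at h1
    exact_mod_cast h1
  have hcastQ : ((n-(k-1) : ℕ) : ℝ) = (n:ℝ) - k + 1 := by
    rw [Nat.cast_sub (by omega : k - 1 ≤ n), Nat.cast_sub (by omega : 1 ≤ k)]
    push_cast
    ring
  -- the decisive inequality
  set a : ℝ := (n:ℝ)/2 + 8*k with hadef
  set b : ℝ := ((n:ℝ) - k + 1)/2 with hbdef
  have hnR : (16:ℝ)*k ≤ (n:ℝ) := by exact_mod_cast hn1
  have hkR : (3:ℝ) ≤ (k:ℝ) := by exact_mod_cast hk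
  have hb0 : (0:ℝ) ≤ b := by rw [hbdef]; linarith
  have hba : b ≤ a := by rw [hadef, hbdef]; linarith
  have han : a ≤ (n:ℝ) := by rw [hadef]; linarith
  have habd : a - b ≤ 9*k := by rw [hadef, hbdef]; linarith
  have hk1 : k - 1 = (k-2)+1 := by omega
  have hps := pow_sub_pow_le_real a b hb0 hba (k-2)
  have hcast2 : ((k-2:ℕ):ℝ) + 1 = (k:ℝ) - 1 := by
    rw [Nat.cast_sub (by omega : 2 ≤ k)]; push_cast; ring
  have hak : a^(k-2) ≤ (n:ℝ)^(k-2) := pow_le_pow_left₀ (by rw [hadef]; positivity) han _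
  have hdiff : a^(k-1) - b^(k-1) ≤ 9*(k:ℝ)*(k-1) * (n:ℝ)^(k-2) := by
    rw [hk1]
    calc a^((k-2)+1) - b^((k-2)+1) ≤ (((k-2:ℕ):ℝ)+1) * (a - b) * a^(k-2) := hps
      _ ≤ ((k:ℝ)-1) * (9*k) * (n:ℝ)^(k-2) := by
          rw [hcast2]
          have hpa : (0:ℝ) ≤ a^(k-2) := by rw [hadef]; positivity
          have h5 : (a - b) * a^(k-2) ≤ (9*(k:ℝ)) * (n:ℝ)^(k-2) :=
            mul_le_mul habd hak hpa (by linarith)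
          calc ((k:ℝ)-1) * (a - b) * a^(k-2) = ((k:ℝ)-1) * ((a - b) * a^(k-2)) := by ring
            _ ≤ ((k:ℝ)-1) * ((9*(k:ℝ)) * (n:ℝ)^(k-2)) := by
                refine mul_le_mul_of_nonneg_left h5 (by linarith)
            _ = ((k:ℝ)-1) * (9*k) * (n:ℝ)^(k-2) := by ring
      _ = 9*(k:ℝ)*(k-1) * (n:ℝ)^(k-2) := by ring
  -- lower bound for γ (n-k+1)^(k-1)
  have hbn2 : (n:ℝ)/2 ≤ (n:ℝ) - k + 1 := by linarith
  have hgl : γ * ((n:ℝ)/2)^(k-1) ≤ γ * ((n:ℝ) - k + 1)^(k-1) := by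
    refine mul_le_mul_of_nonneg_left (pow_le_pow_left₀ (by positivity) hbn2 _) hγ.le
  have hhalfpow : ((n:ℝ)/2)^(k-1) = (n:ℝ)^(k-1) / 2^(k-1) := by rw [div_pow]
  have hnn : (n:ℝ)^(k-1) = (n:ℝ) * (n:ℝ)^(k-2) := by
    rw [hk1, pow_succ]; ring
  have hnn3 : (n:ℝ) * (n:ℝ)^(k-3) ≤ (n:ℝ)^(k-2) := by
    have : (n:ℝ)^(k-2) = (n:ℝ) * (n:ℝ)^(k-3) := by
      rw [show k - 2 = (k-3)+1 by omega, pow_succ]; ring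
    linarith
  have hgl2 : (9*(k:ℝ)*((k:ℝ)-1)) * (n:ℝ)^(k-2) + (7*(k:ℝ)*((k-1).factorial : ℝ)) * (n:ℝ)^(k-2)
      + (n:ℝ)^(k-2) ≤ γ * ((n:ℝ)/2)^(k-1) := by
    rw [hhalfpow, hnn]
    have h2pos : (0:ℝ) < 2^(k-1) := by positivity
    have hnpos : (0:ℝ) ≤ (n:ℝ)^(k-2) := by positivity
    have hfrac : (9*(k:ℝ)*((k:ℝ)-1) + 7*(k:ℝ)*((k-1).factorial : ℝ) + 1) ≤ γ * (n:ℝ) / 2^(k-1) := by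
      rw [le_div_iff₀ h2pos]
      have h9 : 9*(k:ℝ)*((k:ℝ)-1) ≤ 9*(k:ℝ)*k := by nlinarith
      nlinarith
    calc (9*(k:ℝ)*((k:ℝ)-1)) * (n:ℝ)^(k-2) + (7*(k:ℝ)*((k-1).factorial : ℝ)) * (n:ℝ)^(k-2)
          + (n:ℝ)^(k-2)
        = (9*(k:ℝ)*((k:ℝ)-1) + 7*(k:ℝ)*((k-1).factorial : ℝ) + 1) * (n:ℝ)^(k-2) := by ring
      _ ≤ (γ * (n:ℝ) / 2^(k-1)) * (n:ℝ)^(k-2) := mul_le_mul_of_nonneg_right hfrac hnpos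
      _ = γ * ((n:ℝ) * (n:ℝ)^(k-2) / 2^(k-1)) := by ring
  -- contradiction
  set f : ℝ := ((k-1).factorial : ℝ) with hfdef
  set X : ℝ := (((n-1).choose (k-1) : ℕ) : ℝ) with hXdef
  set P : ℝ := (n:ℝ)^(k-2) with hPdef
  set Q : ℝ := ((n:ℝ) - k + 1)^(k-1) with hQdef
  set μ0 : ℝ := ((1:ℝ)/2)^(k-1) with hμ0def
  have hμ0pos : 0 < μ0 + γ := by
    have : (0:ℝ) < μ0 := by rw [hμ0def]; positivity
    linarith
  have hPpos : (0:ℝ) < P := by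
    rw [hPdef]
    have : (0:ℝ) < (n:ℝ) := by linarith
    positivity
  have hμb : μ0 * Q = b^(k-1) := by
    rw [hμ0def, hQdef, hbdef, ← mul_pow, one_div, inv_mul_eq_div]
  have m5 : Q ≤ f * X := by
    have := hlb
    rw [hcastQ] at this
    rw [hQdef, hXdef, hfdef]
    rw [div_le_iff₀ hfacpos] at this
    linarith
  have m6 : f * ((g.choose (k-1) : ℕ) : ℝ) ≤ a^(k-1) := by
    have h1 : ((g.choose (k-1) : ℕ) : ℝ) ≤ ((g:ℕ):ℝ)^(k-1) / f :=
      Nat.choose_le_pow_div (k-1) g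
    have h2 : ((g:ℕ):ℝ)^(k-1) ≤ a^(k-1) := by
      refine pow_le_pow_left₀ (by positivity) ?_ _
      exact hcon
    rw [le_div_iff₀ hfacpos] at h1
    calc f * ((g.choose (k-1) : ℕ) : ℝ) = ((g.choose (k-1) : ℕ) : ℝ) * f := by ring
      _ ≤ ((g:ℕ):ℝ)^(k-1) := h1
      _ ≤ a^(k-1) := h2
  -- multiply the chain by f
  have hchain2 : (μ0 + γ) * (f * X) ≤ f * (((g.choose (k-1) : ℕ) : ℝ)
      + 6*(k:ℝ) * ((n.choose (k-2) : ℕ) : ℝ) + (n:ℝ) * ((K : ℕ) : ℝ)) := by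
    have := mul_le_mul_of_nonneg_left hchain hfacpos.le
    calc (μ0 + γ) * (f * X) = f * ((μ0 + γ) * X) := by ring
      _ ≤ _ := this
  have hleft : a^(k-1) + 7*(k:ℝ)*f*P + P ≤ (μ0 + γ) * (f * X) := by
    have h1 : (μ0 + γ) * Q ≤ (μ0 + γ) * (f * X) := mul_le_mul_of_nonneg_left m5 hμ0pos.le
    have h2 : (μ0 + γ) * Q = μ0 * Q + γ * Q := by ring
    have h3 : γ * ((n:ℝ)/2)^(k-1) ≤ γ * Q := by
      rw [hQdef]
      exact mul_le_mul_of_nonneg_left (pow_le_pow_left₀ (by positivity) hbn2 _) hγ.le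
    have h6 : a^(k-1) + 7*(k:ℝ)*f*P + P ≤ b^(k-1) + γ * ((n:ℝ)/2)^(k-1) := by
      rw [hfdef]
      linarith [hgl2, hdiff]
    calc a^(k-1) + 7*(k:ℝ)*f*P + P ≤ b^(k-1) + γ * ((n:ℝ)/2)^(k-1) := h6
      _ ≤ μ0 * Q + γ * Q := by rw [hμb]; linarith
      _ = (μ0 + γ) * Q := by ring
      _ ≤ (μ0 + γ) * (f * X) := h1
  have hright : f * (((g.choose (k-1) : ℕ) : ℝ)
      + 6*(k:ℝ) * ((n.choose (k-2) : ℕ) : ℝ) + (n:ℝ) * ((K : ℕ) : ℝ)) ≤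
      a^(k-1) + 7*(k:ℝ)*f*P := by
    have t1 : f * (6*(k:ℝ) * ((n.choose (k-2) : ℕ) : ℝ)) ≤ 6*(k:ℝ)*f*P := by
      have := mul_le_mul_of_nonneg_left hub2 (by positivity : (0:ℝ) ≤ 6*(k:ℝ)*f)
      calc f * (6*(k:ℝ) * ((n.choose (k-2) : ℕ) : ℝ))
          = 6*(k:ℝ)*f * ((n.choose (k-2) : ℕ) : ℝ) := by ring
        _ ≤ 6*(k:ℝ)*f * P := this
        _ = 6*(k:ℝ)*f*P := by ring
    have t2 : f * ((n:ℝ) * ((K : ℕ) : ℝ)) ≤ (k:ℝ)*f*P := by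
      have h6 : (n:ℝ) * ((K : ℕ) : ℝ) ≤ (n:ℝ) * ((k:ℝ) * (n:ℝ)^(k-3)) :=
        mul_le_mul_of_nonneg_left hub3 (by positivity)
      have h7 : (n:ℝ) * ((K : ℕ) : ℝ) ≤ (k:ℝ) * P := by
        rw [hPdef]
        calc (n:ℝ) * ((K : ℕ) : ℝ) ≤ (n:ℝ) * ((k:ℝ) * (n:ℝ)^(k-3)) := h6
          _ = (k:ℝ) * ((n:ℝ) * (n:ℝ)^(k-3)) := by ring
          _ ≤ (k:ℝ) * (n:ℝ)^(k-2) := mul_le_mul_of_nonneg_left hnn3 (by positivity)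
      calc f * ((n:ℝ) * ((K : ℕ) : ℝ)) ≤ f * ((k:ℝ) * P) :=
            mul_le_mul_of_nonneg_left h7 hfacpos.le
        _ = (k:ℝ)*f*P := by ring
    have t0 := m6
    calc f * (((g.choose (k-1) : ℕ) : ℝ) + 6*(k:ℝ) * ((n.choose (k-2) : ℕ) : ℝ)
          + (n:ℝ) * ((K : ℕ) : ℝ))
        = f * ((g.choose (k-1) : ℕ) : ℝ) + f * (6*(k:ℝ) * ((n.choose (k-2) : ℕ) : ℝ))
          + f * ((n:ℝ) * ((K : ℕ) : ℝ)) := by ring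
      _ ≤ a^(k-1) + 6*(k:ℝ)*f*P + (k:ℝ)*f*P := by linarith
      _ = a^(k-1) + 7*(k:ℝ)*f*P := by ring
  linarith


/-- From a good co-neighbor we can pick an edge avoiding any small extra set. -/
lemma goodSet_edge (G : HGraph) (k n : ℕ) (w : ℕ) (F : Finset ℕ)
    (hG : G.IsUniform k) (hn : G.verts.card = n)
    (x : ℕ) (hx : x ∈ goodSet G k n w F) (B : Finset ℕ)
    (hB : B.card ≤ k) (hBw : w ∉ B) (hBx : x ∉ B) :
    ∃ e ∈ G.edges, w ∈ e ∧ x ∈ e ∧ Disjoint e F ∧ Disjoint e B := by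
  classical
  unfold goodSet at hx
  rw [Finset.mem_filter, Finset.mem_sdiff, Finset.mem_insert] at hx
  obtain ⟨⟨hxv, hxnwF⟩, hcnt⟩ := hx
  have hxw : x ≠ w := fun h => hxnwF (Or.inl h)
  set C := G.edges.filter (fun e => w ∈ e ∧ x ∈ e ∧ Disjoint e F) with hCdef
  set Bad := C.filter (fun e => ¬ Disjoint e B) with hBadDef
  have hsplit : Bad ⊆ B.biUnion (fun y => G.edges.filter fun e => ({w,x,y} : Finset ℕ) ⊆ e) := by
    intro e he
    rw [hBadDef, Finset.mem_filter] at he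
    obtain ⟨heC, hnd⟩ := he
    rw [hCdef, Finset.mem_filter] at heC
    rw [Finset.not_disjoint_iff] at hnd
    obtain ⟨y, hye, hyB⟩ := hnd
    refine Finset.mem_biUnion.mpr ⟨y, hyB, ?_⟩
    rw [Finset.mem_filter]
    refine ⟨heC.1, ?_⟩
    intro z hz
    simp only [Finset.mem_insert, Finset.mem_singleton] at hz
    rcases hz with rfl | rfl | rfl
    · exact heC.2.1
    · exact heC.2.2.1
    · exact hye
  have hBadCard : Bad.card ≤ k * (n.choose (k-3)) := by
    refine le_trans (Finset.card_le_card hsplit) (le_trans Finset.card_biUnion_le ?_)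
    have hone : ∀ y ∈ B, (G.edges.filter fun e => ({w,x,y} : Finset ℕ) ⊆ e).card ≤
        n.choose (k-3) := by
      intro y hyB
      have hyw : w ≠ y := fun h => hBw (h ▸ hyB)
      have hyx : x ≠ y := fun h => hBx (h ▸ hyB)
      have := card_filter_superset_le' G k n hG hn {w, x, y}
      have hc3 : ({w, x, y} : Finset ℕ).card = 3 :=
        Finset.card_eq_three.mpr ⟨w, x, y, hxw.symm, hyw, hyx, rfl⟩
      rwa [hc3] at this
    calc ∑ y ∈ B, (G.edges.filter fun e => ({w,x,y} : Finset ℕ) ⊆ e).card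
        ≤ ∑ _y ∈ B, n.choose (k-3) := Finset.sum_le_sum hone
      _ = B.card * n.choose (k-3) := by rw [Finset.sum_const, smul_eq_mul]
      _ ≤ k * n.choose (k-3) := Nat.mul_le_mul_right _ hB
  have hne : (C \ Bad).Nonempty := by
    rw [← Finset.card_pos]
    have h1 : (C \ Bad).card = C.card - Bad.card := Finset.card_sdiff_of_subset (Finset.filter_subset _ _)
    omega
  obtain ⟨e, he⟩ := hne
  rw [Finset.mem_sdiff, hCdef, Finset.mem_filter] at he
  obtain ⟨⟨heE, hwe, hxe, hdF⟩, heB⟩ := he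
  refine ⟨e, heE, hwe, hxe, hdF, ?_⟩
  by_contra hnd
  refine heB ?_
  rw [hBadDef, Finset.mem_filter, hCdef, Finset.mem_filter]
  exact ⟨⟨heE, hwe, hxe, hdF⟩, hnd⟩

lemma map_range_getD_eq_take (vs : List ℕ) (a m : ℕ) (h : a + m ≤ vs.length) :
    (List.range m).map (fun j => vs.getD (a + j) 0) = (vs.drop a).take m := by
  have hl : ((List.range m).map (fun j => vs.getD (a + j) 0)).length = ((vs.drop a).take m).length := by
    rw [List.length_map, List.length_range, List.length_take, List.length_drop]
    omega
  refine List.ext_getElem hl ?_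
  intro i h1 h2
  simp only [List.getElem_map, List.getElem_range, List.getElem_take, List.getElem_drop]
  rw [List.getD_eq_getElem?_getD, List.getElem?_eq_getElem (by
    rw [List.length_map, List.length_range] at h1
    rw [List.length_take, List.length_drop] at h2
    omega)]
  simp

lemma pathEdge_eq_take_drop (k : ℕ) (vs : List ℕ) (i : ℕ) (h : i*(k-1)+k ≤ vs.length) :
    pathEdge k vs i = ((vs.drop (i*(k-1))).take k).toFinset := by
  unfold pathEdge
  rw [map_range_getD_eq_take vs (i*(k-1)) k h]

lemma insert_insert_sdiff_pair (s : Finset ℕ) (a b : ℕ) (ha : a ∈ s) (hb : b ∈ s) :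
    insert a (insert b (s \ {a, b})) = s := by
  ext y
  simp only [Finset.mem_insert, Finset.mem_sdiff, Finset.mem_singleton]
  constructor
  · rintro (rfl | rfl | ⟨hy, _⟩) <;> assumption
  · intro hy
    by_cases h1 : y = a
    · exact Or.inl h1
    by_cases h2 : y = b
    · exact Or.inr (Or.inl h2)
    · exact Or.inr (Or.inr ⟨hy, by simp [h1, h2]⟩)

set_option maxHeartbeats 1000000 in
lemma assemble_path (G : HGraph) (k : ℕ) (hk : 3 ≤ k) (hG : G.IsUniform k)
    (e1 e2 e3 e4 : Finset ℕ) (he1 : e1 ∈ G.edges) (he2 : e2 ∈ G.edges)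
    (he3 : e3 ∈ G.edges) (he4 : e4 ∈ G.edges)
    (u w1 x w4 v : ℕ)
    (hu : u ∈ e1) (hw11 : w1 ∈ e1) (hw12 : w1 ∈ e2) (hx2 : x ∈ e2) (hx3 : x ∈ e3)
    (hw43 : w4 ∈ e3) (hw44 : w4 ∈ e4) (hv : v ∈ e4)
    (huw1 : u ≠ w1) (hvw4 : v ≠ w4)
    (h12 : e1 ∩ e2 = {w1}) (h13 : e1 ∩ e3 = ∅) (h14 : e1 ∩ e4 = ∅)
    (h23 : e2 ∩ e3 = {x}) (h24 : e2 ∩ e4 = ∅) (h34 : e3 ∩ e4 = {w4}) :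
    ∃ vs : List ℕ, G.IsLooseUVPath k u v vs ∧ vs.length = 4*(k-1)+1 := by
  classical
  have hc1 : e1.card = k := (hG e1 he1).2
  have hc2 : e2.card = k := (hG e2 he2).2
  have hc3 : e3.card = k := (hG e3 he3).2
  have hc4 : e4.card = k := (hG e4 he4).2
  -- link vertices are distinct from each other
  have hxw1 : x ≠ w1 := by
    intro h
    subst h
    have : x ∈ e1 ∩ e3 := Finset.mem_inter.mpr ⟨hw11, hx3⟩
    rw [h13] at this
    exact absurd this (Finset.notMem_empty x)
  have hw4x : w4 ≠ x := by
    intro h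
    subst h
    have : w4 ∈ e2 ∩ e4 := Finset.mem_inter.mpr ⟨hx2, hw44⟩
    rw [h24] at this
    exact absurd this (Finset.notMem_empty w4)
  set M1 := (e1 \ {u, w1}).toList with hM1
  set M2 := (e2 \ {w1, x}).toList with hM2
  set M3 := (e3 \ {x, w4}).toList with hM3
  set M4 := (e4 \ {w4, v}).toList with hM4
  have hcard_sdiff : ∀ (e : Finset ℕ) (a b : ℕ), a ∈ e → b ∈ e → a ≠ b → e.card = k →
      (e \ ({a, b} : Finset ℕ)).toList.length = k - 2 := by
    intro e a b ha hb hab hc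
    rw [Finset.length_toList, Finset.card_sdiff_of_subset (by
      intro y hy
      simp only [Finset.mem_insert, Finset.mem_singleton] at hy
      rcases hy with rfl | rfl <;> assumption)]
    rw [hc, Finset.card_insert_of_notMem (by simpa using hab), Finset.card_singleton]
  have hlM1 : M1.length = k - 2 := hcard_sdiff e1 u w1 hu hw11 huw1 hc1
  have hlM2 : M2.length = k - 2 := hcard_sdiff e2 w1 x hw12 hx2 hxw1.symm hc2
  have hlM3 : M3.length = k - 2 := hcard_sdiff e3 x w4 hx3 hw43 hw4x.symm hc3
  have hlM4 : M4.length = k - 2 := hcard_sdiff e4 w4 v hw44 hv hvw4.symm hc4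
  set L1 : List ℕ := u :: M1 with hL1
  set L2 : List ℕ := w1 :: M2 with hL2
  set L3 : List ℕ := x :: M3 with hL3
  set L4 : List ℕ := w4 :: M4 with hL4
  have hlL1 : L1.length = k - 1 := by rw [hL1, List.length_cons, hlM1]; omega
  have hlL2 : L2.length = k - 1 := by rw [hL2, List.length_cons, hlM2]; omega
  have hlL3 : L3.length = k - 1 := by rw [hL3, List.length_cons, hlM3]; omega
  have hlL4 : L4.length = k - 1 := by rw [hL4, List.length_cons, hlM4]; omega
  set vs : List ℕ := L1 ++ (L2 ++ (L3 ++ (L4 ++ [v]))) with hvs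
  have hlen : vs.length = 4*(k-1)+1 := by
    rw [hvs]
    simp only [List.length_append, List.length_cons, List.length_nil]
    omega
  -- the four segments
  have hseg0 : (vs.drop (0*(k-1))).take k = L1 ++ [w1] := by
    rw [hvs]
    rw [zero_mul, List.drop_zero]
    rw [show k = L1.length + 1 by omega]
    rw [List.take_append]
    congr 1
    all_goals simp [hL2]
  have hdrop1 : vs.drop (1*(k-1)) = L2 ++ (L3 ++ (L4 ++ [v])) := by
    rw [hvs, one_mul, show k - 1 = L1.length by omega, List.drop_left]
  have hseg1 : (vs.drop (1*(k-1))).take k = L2 ++ [x] := by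
    rw [hdrop1, show k = L2.length + 1 by omega, List.take_append]
    congr 1
    all_goals simp [hL3]
  have hdrop2 : vs.drop (2*(k-1)) = L3 ++ (L4 ++ [v]) := by
    have h2 : 2*(k-1) = 1*(k-1) + (k-1) := by ring
    rw [h2, ← List.drop_drop, hdrop1, show k - 1 = L2.length by omega, List.drop_left]
  have hseg2 : (vs.drop (2*(k-1))).take k = L3 ++ [w4] := by
    rw [hdrop2, show k = L3.length + 1 by omega, List.take_append]
    congr 1
    all_goals simp [hL4]
  have hdrop3 : vs.drop (3*(k-1)) = L4 ++ [v] := by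
    have h2 : 3*(k-1) = 2*(k-1) + (k-1) := by ring
    rw [h2, ← List.drop_drop, hdrop2, show k - 1 = L3.length by omega, List.drop_left]
  have hseg3 : (vs.drop (3*(k-1))).take k = L4 ++ [v] := by
    rw [hdrop3]
    apply List.take_of_length_le
    rw [List.length_append, hlL4]
    simp
    omega
  -- toFinset of the segments
  have htf : ∀ (e : Finset ℕ) (a b : ℕ), a ∈ e → b ∈ e →
      ((a :: (e \ ({a, b} : Finset ℕ)).toList) ++ [b]).toFinset = e := by
    intro e a b ha hb
    ext y
    simp only [List.toFinset_append, List.toFinset_cons, Finset.toList_toFinset,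
      Finset.mem_union, Finset.mem_insert, Finset.mem_sdiff, Finset.mem_singleton,
      List.toFinset_cons, List.toFinset_nil, LawfulSingleton.insert_empty_eq]
    constructor
    · rintro ((rfl | ⟨hy, _⟩) | rfl) <;> assumption
    · intro hy
      by_cases h1 : y = a
      · exact Or.inl (Or.inl h1)
      by_cases h2 : y = b
      · exact Or.inr h2
      · exact Or.inl (Or.inr ⟨hy, by simp [h1, h2]⟩)
  -- segment toFinset identities
  have hE0 : ((vs.drop (0*(k-1))).take k).toFinset = e1 := by
    rw [hseg0, hL1, hM1]; exact htf e1 u w1 hu hw11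
  have hE1 : ((vs.drop (1*(k-1))).take k).toFinset = e2 := by
    rw [hseg1, hL2, hM2]; exact htf e2 w1 x hw12 hx2
  have hE2 : ((vs.drop (2*(k-1))).take k).toFinset = e3 := by
    rw [hseg2, hL3, hM3]; exact htf e3 x w4 hx3 hw43
  have hE3 : ((vs.drop (3*(k-1))).take k).toFinset = e4 := by
    rw [hseg3, hL4, hM4]; exact htf e4 w4 v hw44 hv
  have hp0 : pathEdge k vs 0 = e1 := by
    rw [pathEdge_eq_take_drop k vs 0 (by rw [hlen]; omega)]; exact hE0
  have hp1 : pathEdge k vs 1 = e2 := by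
    rw [pathEdge_eq_take_drop k vs 1 (by rw [hlen]; omega)]; exact hE1
  have hp2 : pathEdge k vs 2 = e3 := by
    rw [pathEdge_eq_take_drop k vs 2 (by rw [hlen]; omega)]; exact hE2
  have hp3 : pathEdge k vs 3 = e4 := by
    rw [pathEdge_eq_take_drop k vs 3 (by rw [hlen]; omega)]; exact hE3
  -- cardinality of the union of the four edges
  have hc12 : (e1 ∪ e2).card = 2*k - 1 := by
    have := Finset.card_union_add_card_inter e1 e2
    rw [h12, Finset.card_singleton, hc1, hc2] at this
    omega
  have hi3 : (e1 ∪ e2) ∩ e3 = {x} := by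
    rw [Finset.union_inter_distrib_right, h13, h23, Finset.empty_union]
  have hc123 : (e1 ∪ e2 ∪ e3).card = 3*k - 2 := by
    have := Finset.card_union_add_card_inter (e1 ∪ e2) e3
    rw [hi3, Finset.card_singleton, hc12, hc3] at this
    omega
  have hi4 : (e1 ∪ e2 ∪ e3) ∩ e4 = {w4} := by
    rw [Finset.union_inter_distrib_right, Finset.union_inter_distrib_right, h14, h24, h34,
      Finset.empty_union, Finset.empty_union]
  have hc1234 : (e1 ∪ e2 ∪ e3 ∪ e4).card = 4*k - 3 := by
    have := Finset.card_union_add_card_inter (e1 ∪ e2 ∪ e3) e4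
    rw [hi4, Finset.card_singleton, hc123, hc4] at this
    omega
  -- nodup
  have hsubvs : e1 ∪ e2 ∪ e3 ∪ e4 ⊆ vs.toFinset := by
    intro y hy
    rw [List.mem_toFinset]
    have hmem : ∀ a : ℕ, y ∈ ((vs.drop (a*(k-1))).take k).toFinset → y ∈ vs := by
      intro a hya
      rw [List.mem_toFinset] at hya
      exact List.mem_of_mem_drop (List.mem_of_mem_take hya)
    rcases Finset.mem_union.mp hy with hy' | hy4
    · rcases Finset.mem_union.mp hy' with hy'' | hy3
      · rcases Finset.mem_union.mp hy'' with hy1 | hy2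
        · exact hmem 0 (by rw [hE0]; exact hy1)
        · exact hmem 1 (by rw [hE1]; exact hy2)
      · exact hmem 2 (by rw [hE2]; exact hy3)
    · exact hmem 3 (by rw [hE3]; exact hy4)
  have hnodup : vs.Nodup := by
    have h1 : vs.toFinset.card ≤ vs.length := by
      rw [List.card_toFinset]
      exact List.Sublist.length_le (List.dedup_sublist vs)
    have h2 : 4*k - 3 ≤ vs.toFinset.card := by
      rw [← hc1234]
      exact Finset.card_le_card hsubvs
    have h3 : vs.toFinset.card = vs.length := by
      rw [hlen]
      omega
    have h4 : vs.dedup.length = vs.length := by rw [← List.card_toFinset]; exact h3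
    have h5 := (List.dedup_sublist vs).eq_of_length h4
    rw [← h5]
    exact List.nodup_dedup vs
  -- count of path edges
  have hnum : numPathEdges k vs = 4 := by
    unfold numPathEdges
    rw [hlen, show 4*(k-1)+1-1 = (k-1)*4 by omega]
    exact Nat.mul_div_cancel_left 4 (by omega : 0 < k - 1)
  have hedges : ∀ i < numPathEdges k vs, pathEdge k vs i ∈ G.edges := by
    intro i hi
    rw [hnum] at hi
    interval_cases i
    · rw [hp0]; exact he1
    · rw [hp1]; exact he2
    · rw [hp2]; exact he3
    · rw [hp3]; exact he4
  have hhead : vs.head? = some u := by rw [hvs, hL1]; rfl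
  have hlast : vs.getLast? = some v := by
    have hre : vs = (L1 ++ (L2 ++ (L3 ++ L4))) ++ [v] := by
      rw [hvs]
      simp [List.append_assoc]
    rw [hre, List.getLast?_concat]
  exact ⟨vs, ⟨⟨⟨hnodup, by rw [hlen]; omega, by rw [hlen, show 4*(k-1)+1-1 = (k-1)*4 by omega]; exact ⟨4, rfl⟩⟩, hedges⟩, hhead, hlast⟩, hlen⟩

-- AUXEND

/-- Dense Connection Lemma. -/
theorem dense_connection (k d : ℕ) (hk : 3 ≤ k) (hd1 : 1 ≤ d) (hdk : d < k)
    (γ : ℝ) (hγ : 0 < γ) :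
    ∃ n₀ : ℕ, ∀ n : ℕ, n₀ ≤ n →
      ∀ G : HGraph, G.IsUniform k → G.verts.card = n →
        G.MinDegAtLeast d ((muD k d + γ) * ((n - d).choose (k - d) : ℝ)) →
        ∀ u ∈ G.verts, ∀ v ∈ G.verts, u ≠ v →
          ∃ vs : List ℕ, G.IsLooseUVPath k u v vs ∧ vs.length = 4 * (k - 1) + 1 := by
  classical
  have hmu0 : 0 ≤ muD k d := muD_nonneg k d hd1 hdk
  obtain ⟨N1, hN1⟩ := eventually_choose_lt (k-d) d (by omega) ((6*k : ℕ) : ℝ) γ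
    (by positivity) hγ
  obtain ⟨N2, hN2⟩ := exists_nat_gt ((2:ℝ)^(k-1) * (9*(k:ℝ)*k + 7*k*((k-1).factorial : ℝ) + 1) / γ)
  refine ⟨N1 + N2 + 16*k + 1, fun n hn G hG hGcard hdeg u hu v hv huv => ?_⟩
  have hnN1 : N1 ≤ n := by omega
  have hn16 : 16*k ≤ n := by omega
  have hnN2 : N2 + 1 ≤ n := by omega
  have hchoose_nonneg : (0:ℝ) ≤ (((n-d).choose (k-d) : ℕ) : ℝ) := Nat.cast_nonneg _
  have hm : γ * (((n - d).choose (k - d) : ℕ) : ℝ) ≤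
      (muD k d + γ) * (((n - d).choose (k - d) : ℕ) : ℝ) := by nlinarith
  have hfind : ∀ W F : Finset ℕ, W ⊆ G.verts → W.card ≤ d → Disjoint W F → F.card ≤ 6*k →
      ∃ e ∈ G.edges, W ⊆ e ∧ Disjoint e F := by
    intro W F hW hWd hWF hF
    refine exists_edge_avoiding G k d n γ _ hG hGcard hdeg hγ hm W F hW hWd hWF ?_ (by omega)
    have h1 := hN1 n hnN1
    have h2 : ((F.card : ℕ):ℝ) * ((n.choose (k-d-1) : ℕ) : ℝ) ≤
        ((6*k : ℕ):ℝ) * ((n.choose (k-d-1) : ℕ) : ℝ) := by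
      have hx : ((F.card : ℕ):ℝ) ≤ ((6*k : ℕ):ℝ) := by exact_mod_cast hF
      exact mul_le_mul_of_nonneg_right hx (Nat.cast_nonneg _)
    have h3 : k - d - 1 = (k-d) - 1 := by omega
    rw [h3]
    rw [h3] at h2
    exact lt_of_le_of_lt h2 h1
  -- Step 1: an edge at u avoiding v
  obtain ⟨e1, he1, hue1, he1v⟩ := hfind {u} {v} (Finset.singleton_subset_iff.mpr hu)
    (by simpa using hd1) (by simpa using huv) (by simp; omega)
  rw [Finset.singleton_subset_iff] at hue1
  have hve1 : v ∉ e1 := fun h => (Finset.disjoint_right.mp he1v (Finset.mem_singleton_self v)) h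
  have hce1 : e1.card = k := (hG e1 he1).2
  -- Step 2: w1
  have hne1 : (e1.erase u).Nonempty := by
    rw [← Finset.card_pos, Finset.card_erase_of_mem hue1, hce1]
    omega
  obtain ⟨w1, hw1⟩ := hne1
  have hw1e1 : w1 ∈ e1 := Finset.mem_of_mem_erase hw1
  have hw1u : w1 ≠ u := Finset.ne_of_mem_erase hw1
  -- Step 3: an edge at v avoiding e1
  obtain ⟨e4, he4, hve4, he4e1⟩ := hfind {v} e1 (Finset.singleton_subset_iff.mpr hv)
    (by simpa using hd1) (by simpa using hve1) (by omega)
  rw [Finset.singleton_subset_iff] at hve4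
  have hce4 : e4.card = k := (hG e4 he4).2
  have hd14 : Disjoint e4 e1 := he4e1
  have h14 : e1 ∩ e4 = ∅ := by
    rw [← Finset.disjoint_iff_inter_eq_empty]
    exact hd14.symm
  -- Step 4: w4
  have hne4 : (e4.erase v).Nonempty := by
    rw [← Finset.card_pos, Finset.card_erase_of_mem hve4, hce4]
    omega
  obtain ⟨w4, hw4⟩ := hne4
  have hw4e4 : w4 ∈ e4 := Finset.mem_of_mem_erase hw4
  have hw4v : w4 ≠ v := Finset.ne_of_mem_erase hw4
  have hw4w1 : w4 ≠ w1 := fun h => (Finset.disjoint_left.mp hd14 hw4e4) (h ▸ hw1e1)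
  have hw4e1 : w4 ∉ e1 := Finset.disjoint_left.mp hd14 hw4e4
  have hw1e4 : w1 ∉ e4 := Finset.disjoint_right.mp hd14 hw1e1
  have hcF : (e1 ∪ e4).card ≤ 2*k := by
    calc (e1 ∪ e4).card ≤ e1.card + e4.card := Finset.card_union_le _ _
      _ ≤ 2*k := by omega
  -- the middle edges e2, e3 and the link vertex x
  have hmain : ∃ (x : ℕ) (e2 e3 : Finset ℕ), e2 ∈ G.edges ∧ e3 ∈ G.edges ∧
      w1 ∈ e2 ∧ x ∈ e2 ∧ x ∈ e3 ∧ w4 ∈ e3 ∧ x ∉ e1 ∪ e4 ∧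
      Disjoint e2 ((e1 ∪ e4).erase w1) ∧ Disjoint e3 ((e1 ∪ e4).erase w4) ∧
      Disjoint e3 (e2 \ ({x, w4} : Finset ℕ)) := by
    rcases eq_or_lt_of_le hd1 with hd1' | hd2
    · -- case d = 1
      have hdd : d = 1 := hd1'.symm
      subst hdd
      have hmu1 : ((1:ℝ)/2)^(k-1) ≤ muD k 1 := muD_one_ge k hk
      have hdegw : ∀ w ∈ G.verts, (((1:ℝ)/2)^(k-1) + γ) * (((n-1).choose (k-1) : ℕ) : ℝ) ≤
          (G.deg {w} : ℝ) := by
        intro w hw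
        have h1 := hdeg {w} (Finset.singleton_subset_iff.mpr hw) (Finset.card_singleton w)
        have h2 : (((1:ℝ)/2)^(k-1) + γ) * (((n-1).choose (k-1) : ℕ) : ℝ) ≤
            (muD k 1 + γ) * (((n-1).choose (k-1) : ℕ) : ℝ) := by
          have hnn : (0:ℝ) ≤ (((n-1).choose (k-1) : ℕ) : ℝ) := Nat.cast_nonneg _
          nlinarith
        exact le_trans h2 h1
      have hn2' : (2:ℝ)^(k-1) * (9*(k:ℝ)*k + 7*k*((k-1).factorial : ℝ) + 1) ≤ γ * n := by
        rw [div_lt_iff₀ hγ] at hN2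
        have h1 : ((N2:ℝ) + 1) ≤ (n:ℝ) := by exact_mod_cast hnN2
        nlinarith
      set F1 := (e1 ∪ e4).erase w1 with hF1
      set F4 := (e1 ∪ e4).erase w4 with hF4
      have hF1card : F1.card ≤ 6*k := by
        rw [hF1]
        calc ((e1 ∪ e4).erase w1).card ≤ (e1 ∪ e4).card := Finset.card_erase_le
          _ ≤ 2*k := hcF
          _ ≤ 6*k := by omega
      have hF4card : F4.card ≤ 6*k := by
        rw [hF4]
        calc ((e1 ∪ e4).erase w4).card ≤ (e1 ∪ e4).card := Finset.card_erase_le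
          _ ≤ 2*k := hcF
          _ ≤ 6*k := by omega
      have hG1 := goodSet_large G k n γ hk hG hGcard hγ w1 F1
        (Finset.notMem_erase w1 _) hF1card (hdegw w1 ((hG e1 he1).1 hw1e1)) hn16 hn2'
      have hG4 := goodSet_large G k n γ hk hG hGcard hγ w4 F4
        (Finset.notMem_erase w4 _) hF4card (hdegw w4 ((hG e4 he4).1 hw4e4)) hn16 hn2'
      have hsub1 : goodSet G k n w1 F1 ⊆ G.verts := by
        intro y hy
        unfold goodSet at hy
        rw [Finset.mem_filter, Finset.mem_sdiff] at hy
        exact hy.1.1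
      have hsub4 : goodSet G k n w4 F4 ⊆ G.verts := by
        intro y hy
        unfold goodSet at hy
        rw [Finset.mem_filter, Finset.mem_sdiff] at hy
        exact hy.1.1
      have hunion : (goodSet G k n w1 F1 ∪ goodSet G k n w4 F4).card ≤ n := by
        refine le_trans (Finset.card_le_card (Finset.union_subset hsub1 hsub4)) ?_
        exact le_of_eq hGcard
      have hinterpos : 0 < (goodSet G k n w1 F1 ∩ goodSet G k n w4 F4).card := by
        have hsum := Finset.card_inter_add_card_union (goodSet G k n w1 F1) (goodSet G k n w4 F4)
        have hc14 : (n:ℝ) < ((goodSet G k n w1 F1).card : ℝ) + ((goodSet G k n w4 F4).card : ℝ) := by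
          have hk0 : (0:ℝ) ≤ (k:ℝ) := Nat.cast_nonneg k
          linarith
        have hlt : n < (goodSet G k n w1 F1).card + (goodSet G k n w4 F4).card := by
          exact_mod_cast hc14
        omega
      obtain ⟨x, hx⟩ := Finset.card_pos.mp hinterpos
      rw [Finset.mem_inter] at hx
      obtain ⟨hx1, hx4⟩ := hx
      have hxF : x ∉ e1 ∪ e4 := by
        intro hxe
        have hw1m : w1 ∈ e1 ∪ e4 := Finset.mem_union_left _ hw1e1
        have hins : insert w1 F1 = e1 ∪ e4 := by rw [hF1]; exact Finset.insert_erase hw1m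
        unfold goodSet at hx1
        rw [Finset.mem_filter, Finset.mem_sdiff] at hx1
        exact hx1.1.2 (hins ▸ hxe)
      obtain ⟨e2, he2, hw1e2, hxe2, he2F1, -⟩ := goodSet_edge G k n w1 F1 hG hGcard x hx1 ∅
        (by simp) (by simp) (by simp)
      have hw4e2 : w4 ∉ e2 := by
        intro h
        have hmem : w4 ∈ F1 := by
          rw [hF1]
          exact Finset.mem_erase.mpr ⟨hw4w1, Finset.mem_union_right _ hw4e4⟩
        exact (Finset.disjoint_left.mp he2F1 h) hmem
      obtain ⟨e3, he3, hw4e3, hxe3, he3F4, he3B⟩ := goodSet_edge G k n w4 F4 hG hGcard x hx4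
        (e2 \ ({x, w4} : Finset ℕ))
        (by
          calc (e2 \ ({x, w4} : Finset ℕ)).card ≤ e2.card :=
            Finset.card_le_card (Finset.sdiff_subset)
            _ = k := (hG e2 he2).2
            _ ≤ k := le_rfl)
        (by simp [hw4e2]) (by simp)
      exact ⟨x, e2, e3, he2, he3, hw1e2, hxe2, hxe3, hw4e3, hxF, he2F1, he3F4, he3B⟩
    · -- case 2 ≤ d
      have hpick : (G.verts \ (e1 ∪ e4)).Nonempty := by
        rw [← Finset.card_pos]
        have h1 := Finset.le_card_sdiff (e1 ∪ e4) G.verts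
        omega
      obtain ⟨x, hx⟩ := hpick
      rw [Finset.mem_sdiff] at hx
      obtain ⟨hxv, hxF⟩ := hx
      have hxw1 : x ≠ w1 := fun h => hxF (Finset.mem_union_left _ (h ▸ hw1e1))
      have hxw4 : x ≠ w4 := fun h => hxF (Finset.mem_union_right _ (h ▸ hw4e4))
      -- e2 containing w1 and x
      have hWsub : ({w1, x} : Finset ℕ) ⊆ G.verts := by
        intro y hy
        rcases Finset.mem_insert.mp hy with rfl | hy
        · exact (hG e1 he1).1 hw1e1
        · rw [Finset.mem_singleton] at hy
          subst hy
          exact hxv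
      have hWcard : ({w1, x} : Finset ℕ).card ≤ d := by
        have h2 : ({w1, x} : Finset ℕ).card ≤ 2 := by
          refine le_trans (Finset.card_insert_le _ _) ?_
          simp
        omega
      have hWdisj : Disjoint ({w1, x} : Finset ℕ) ((e1 ∪ e4).erase w1) := by
        rw [Finset.disjoint_left]
        intro y hy hy2
        rcases Finset.mem_insert.mp hy with rfl | hy
        · exact (Finset.notMem_erase y _) hy2
        · rw [Finset.mem_singleton] at hy
          subst hy
          exact hxF (Finset.mem_of_mem_erase hy2)
      obtain ⟨e2, he2, hWe2, he2F⟩ := hfind {w1, x} ((e1 ∪ e4).erase w1) hWsub hWcard hWdisj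
        (by
          calc ((e1 ∪ e4).erase w1).card ≤ (e1 ∪ e4).card := Finset.card_erase_le
            _ ≤ 2*k := hcF
            _ ≤ 6*k := by omega)
      have hw1e2 : w1 ∈ e2 := hWe2 (Finset.mem_insert_self _ _)
      have hxe2 : x ∈ e2 := hWe2 (by simp)
      have hw4e2 : w4 ∉ e2 := by
        intro h
        refine (Finset.disjoint_left.mp he2F h) ?_
        exact Finset.mem_erase.mpr ⟨hw4w1, Finset.mem_union_right _ hw4e4⟩
      -- e3 containing x and w4
      have hW3sub : ({x, w4} : Finset ℕ) ⊆ G.verts := by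
        intro y hy
        rcases Finset.mem_insert.mp hy with rfl | hy
        · exact hxv
        · rw [Finset.mem_singleton] at hy
          subst hy
          exact (hG e4 he4).1 hw4e4
      have hW3card : ({x, w4} : Finset ℕ).card ≤ d := by
        have h2 : ({x, w4} : Finset ℕ).card ≤ 2 := by
          refine le_trans (Finset.card_insert_le _ _) ?_
          simp
        omega
      have hW3disj : Disjoint ({x, w4} : Finset ℕ) (((e1 ∪ e2 ∪ e4).erase x).erase w4) := by
        rw [Finset.disjoint_left]
        intro y hy hy2
        rcases Finset.mem_insert.mp hy with rfl | hy
        · exact (Finset.notMem_erase y _) (Finset.mem_of_mem_erase hy2)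
        · rw [Finset.mem_singleton] at hy
          subst hy
          exact (Finset.notMem_erase y _) hy2
      obtain ⟨e3, he3, hWe3, he3F⟩ := hfind {x, w4} (((e1 ∪ e2 ∪ e4).erase x).erase w4)
        hW3sub hW3card hW3disj
        (by
          have hc2 : e2.card = k := (hG e2 he2).2
          calc (((e1 ∪ e2 ∪ e4).erase x).erase w4).card ≤ ((e1 ∪ e2 ∪ e4).erase x).card :=
            Finset.card_erase_le
            _ ≤ (e1 ∪ e2 ∪ e4).card := Finset.card_erase_le
            _ ≤ (e1 ∪ e2).card + e4.card := Finset.card_union_le _ _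
            _ ≤ e1.card + e2.card + e4.card := by
                have := Finset.card_union_le e1 e2
                omega
            _ ≤ 6*k := by omega)
      have hxe3 : x ∈ e3 := hWe3 (Finset.mem_insert_self _ _)
      have hw4e3 : w4 ∈ e3 := hWe3 (by simp)
      have hd3a : Disjoint e3 ((e1 ∪ e4).erase w4) := by
        refine Finset.disjoint_of_subset_right ?_ he3F
        intro y hy
        rw [Finset.mem_erase] at hy
        obtain ⟨hyw4, hyu⟩ := hy
        have hyx : y ≠ x := fun h => hxF (h ▸ hyu)
        refine Finset.mem_erase.mpr ⟨hyw4, Finset.mem_erase.mpr ⟨hyx, ?_⟩⟩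
        rcases Finset.mem_union.mp hyu with h | h
        · exact Finset.mem_union_left _ (Finset.mem_union_left _ h)
        · exact Finset.mem_union_right _ h
      have hd3b : Disjoint e3 (e2 \ ({x, w4} : Finset ℕ)) := by
        refine Finset.disjoint_of_subset_right ?_ he3F
        intro y hy
        rw [Finset.mem_sdiff] at hy
        obtain ⟨hy2, hyn⟩ := hy
        simp only [Finset.mem_insert, Finset.mem_singleton, not_or] at hyn
        refine Finset.mem_erase.mpr ⟨hyn.2, Finset.mem_erase.mpr ⟨hyn.1, ?_⟩⟩
        exact Finset.mem_union_left _ (Finset.mem_union_right _ hy2)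
      exact ⟨x, e2, e3, he2, he3, hw1e2, hxe2, hxe3, hw4e3, hxF, he2F, hd3a, hd3b⟩
  -- derive the intersection pattern and assemble the path
  obtain ⟨x, e2, e3, he2, he3, hw1e2, hxe2, hxe3, hw4e3, hxF, hd2a, hd3a, hd3b⟩ := hmain
  have hxe1 : x ∉ e1 := fun h => hxF (Finset.mem_union_left _ h)
  have hxe4 : x ∉ e4 := fun h => hxF (Finset.mem_union_right _ h)
  have hw4e2 : w4 ∉ e2 := fun h => (Finset.disjoint_left.mp hd2a h)
    (Finset.mem_erase.mpr ⟨hw4w1, Finset.mem_union_right _ hw4e4⟩)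
  have h12 : e1 ∩ e2 = {w1} := by
    ext y
    rw [Finset.mem_inter, Finset.mem_singleton]
    constructor
    · rintro ⟨hy1, hy2⟩
      by_contra hne
      exact (Finset.disjoint_left.mp hd2a hy2)
        (Finset.mem_erase.mpr ⟨hne, Finset.mem_union_left _ hy1⟩)
    · rintro rfl
      exact ⟨hw1e1, hw1e2⟩
  have h24 : e2 ∩ e4 = ∅ := by
    rw [Finset.eq_empty_iff_forall_notMem]
    intro y hy
    rw [Finset.mem_inter] at hy
    obtain ⟨hy2, hy4⟩ := hy
    have hyw1 : y ≠ w1 := fun h => hw1e4 (h ▸ hy4)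
    exact (Finset.disjoint_left.mp hd2a hy2)
      (Finset.mem_erase.mpr ⟨hyw1, Finset.mem_union_right _ hy4⟩)
  have h13 : e1 ∩ e3 = ∅ := by
    rw [Finset.eq_empty_iff_forall_notMem]
    intro y hy
    rw [Finset.mem_inter] at hy
    obtain ⟨hy1, hy3⟩ := hy
    have hyw4 : y ≠ w4 := fun h => hw4e1 (h ▸ hy1)
    exact (Finset.disjoint_left.mp hd3a hy3)
      (Finset.mem_erase.mpr ⟨hyw4, Finset.mem_union_left _ hy1⟩)
  have h34 : e3 ∩ e4 = {w4} := by
    ext y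
    rw [Finset.mem_inter, Finset.mem_singleton]
    constructor
    · rintro ⟨hy3, hy4⟩
      by_contra hne
      exact (Finset.disjoint_left.mp hd3a hy3)
        (Finset.mem_erase.mpr ⟨hne, Finset.mem_union_right _ hy4⟩)
    · rintro rfl
      exact ⟨hw4e3, hw4e4⟩
  have h23 : e2 ∩ e3 = {x} := by
    ext y
    rw [Finset.mem_inter, Finset.mem_singleton]
    constructor
    · rintro ⟨hy2, hy3⟩
      by_contra hne
      have hyw4 : y ≠ w4 := fun h => hw4e2 (h ▸ hy2)
      refine (Finset.disjoint_left.mp hd3b hy3) ?_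
      rw [Finset.mem_sdiff]
      exact ⟨hy2, by simp [hne, hyw4]⟩
    · rintro rfl
      exact ⟨hxe2, hxe3⟩
  exact assemble_path G k hk hG e1 e2 e3 e4 he1 he2 he3 he4 u w1 x w4 v hue1 hw1e1 hw1e2
    hxe2 hxe3 hw4e3 hw4e4 hve4 hw1u.symm hw4v.symm h12 h13 h14 h23 h24 h34
end

section
/- For all integers k ≥ 3 and T ≥ 1 and every γ > 0, there exists K₀ such that for every K ≥ K₀ the following holds. Let H be the k-graph that is the union of T copies of a K-sparse k-uniform absorber which are all rooted in the same (k−1)-set X but are pairwise vertex-disjoint outside X, where the edge set of H consists of the edges of the paths of these absorbers. Then m_k(H) ≤ 2/(k−1) + γ. -/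
open Finset

attribute [local instance] Classical.propDecidable

lemma getD_inj' {α : Type*} {l : List α} {d : α} (h : l.Nodup) {i j : ℕ}
    (hi : i < l.length) (hj : j < l.length) (hij : l.getD i d = l.getD j d) : i = j := by
  rw [List.getD_eq_getElem l d hi, List.getD_eq_getElem l d hj] at hij
  exact (List.Nodup.getElem_inj_iff h).mp hij

lemma getD_mem' {α : Type*} {l : List α} {d : α} {i : ℕ} (hi : i < l.length) :
    l.getD i d ∈ l := by
  rw [List.getD_eq_getElem l d hi]; exact List.getElem_mem hi

lemma getD_map_range {α : Type*} (n i : ℕ) (f : ℕ → α) (h : i < n) (d : α) :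
    ((List.range n).map f).getD i d = f i := by
  rw [List.getD_eq_getElem _ _ (by simpa using h)]
  simp

lemma getD_append_last {α : Type*} (l : List α) (w d : α) :
    (l ++ [w]).getD l.length d = w := by
  rw [List.getD_append_right l [w] d l.length le_rfl]
  simp

lemma nodup_concat' {α : Type*} {l : List α} {w : α} (h : l.Nodup) (hw : w ∉ l) :
    (l ++ [w]).Nodup := by
  rw [List.nodup_append]
  exact ⟨h, List.nodup_singleton w, by intro a ha b hb hab; simp only [List.mem_singleton] at hb; rw [hab, hb] at ha; exact hw ha⟩

lemma mod_succ_eq {ℓ i : ℕ} (hℓ : 2 ≤ ℓ) : (i % ℓ + 1) % ℓ = (i + 1) % ℓ := by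
  conv_rhs => rw [Nat.add_mod]
  rw [Nat.mod_eq_of_lt (show 1 < ℓ by omega)]

section PathLemmas

variable {k : ℕ}

lemma pathEdge_eq_image (k : ℕ) (vs : List ℕ) (i : ℕ) :
    pathEdge k vs i = (Finset.range k).image (fun j => vs.getD (i * (k - 1) + j) 0) := by
  unfold pathEdge
  ext x
  simp [List.mem_map]

lemma pos_lt_length (hk : 2 ≤ k) {vs : List ℕ} (hlp : IsLoosePathList k vs)
    {i j : ℕ} (hi : i < numPathEdges k vs) (hj : j < k) :
    i * (k - 1) + j < vs.length := by
  obtain ⟨-, hlen, hdvd⟩ := hlp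
  have h1 : numPathEdges k vs * (k - 1) = vs.length - 1 := Nat.div_mul_cancel hdvd
  have h2 : (i + 1) * (k - 1) ≤ numPathEdges k vs * (k - 1) :=
    Nat.mul_le_mul_right _ hi
  have h3 : i * (k - 1) + j ≤ i * (k - 1) + (k - 1) := by omega
  have h4 : i * (k - 1) + (k - 1) = (i + 1) * (k - 1) := by ring
  omega

lemma pathEdge_subset_toFinset (hk : 2 ≤ k) {vs : List ℕ} (hlp : IsLoosePathList k vs)
    {i : ℕ} (hi : i < numPathEdges k vs) :
    pathEdge k vs i ⊆ vs.toFinset := by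
  rw [pathEdge_eq_image]
  intro x hx
  simp only [Finset.mem_image, Finset.mem_range] at hx
  obtain ⟨j, hj, rfl⟩ := hx
  exact List.mem_toFinset.mpr (getD_mem' (pos_lt_length hk hlp hi hj))

/-- The "tail" of a path edge: all but its first vertex. -/
def tailF (k : ℕ) (vs : List ℕ) (i : ℕ) : Finset ℕ :=
  (Finset.Icc 1 (k - 1)).image (fun j => vs.getD (i * (k - 1) + j) 0)

lemma tailF_subset (hk : 2 ≤ k) (vs : List ℕ) (i : ℕ) :
    tailF k vs i ⊆ pathEdge k vs i := by
  rw [pathEdge_eq_image]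
  apply Finset.image_subset_image
  intro j hj
  simp only [Finset.mem_Icc] at hj
  simp only [Finset.mem_range]
  omega

lemma tailF_card (hk : 2 ≤ k) {vs : List ℕ} (hlp : IsLoosePathList k vs)
    {i : ℕ} (hi : i < numPathEdges k vs) :
    (tailF k vs i).card = k - 1 := by
  rw [tailF, Finset.card_image_of_injOn, Nat.card_Icc]
  · omega
  · intro a ha b hb hab
    simp only [Finset.coe_Icc, Set.mem_Icc] at ha hb
    have := getD_inj' hlp.1 (pos_lt_length hk hlp hi (by omega))
      (pos_lt_length hk hlp hi (by omega)) hab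
    omega

lemma tailF_disjoint_same (hk : 2 ≤ k) {vs : List ℕ} (hlp : IsLoosePathList k vs)
    {i i' : ℕ} (hi : i < numPathEdges k vs) (hi' : i' < numPathEdges k vs)
    (hne : i ≠ i') : Disjoint (tailF k vs i) (tailF k vs i') := by
  rw [Finset.disjoint_left]
  intro x hx hx'
  simp only [tailF, Finset.mem_image, Finset.mem_Icc] at hx hx'
  obtain ⟨j, hj, rfl⟩ := hx
  obtain ⟨j', hj', he⟩ := hx'
  have hpos := getD_inj' hlp.1 (pos_lt_length hk hlp hi' (show j' < k by omega))
    (pos_lt_length hk hlp hi (show j < k by omega)) he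
  -- i' * (k-1) + j' = i * (k-1) + j with 1 ≤ j,j' ≤ k-1 and i ≠ i': contradiction
  rcases Nat.lt_or_ge i i' with h | h
  · have : (i + 1) * (k - 1) ≤ i' * (k - 1) := Nat.mul_le_mul_right _ h
    have : i * (k - 1) + (k - 1) ≤ i' * (k - 1) := by nlinarith
    omega
  · have h2 : i' < i := by omega
    have : (i' + 1) * (k - 1) ≤ i * (k - 1) := Nat.mul_le_mul_right _ h2
    have : i' * (k - 1) + (k - 1) ≤ i * (k - 1) := by nlinarith
    omega

end PathLemmas

section Forest

lemma getD_drop' {α : Type*} (L : List α) (a i : ℕ) (d : α) (h : a + i < L.length) :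
    (L.drop a).getD i d = L.getD (a + i) d := by
  rw [List.getD_eq_getElem _ _ (by rw [List.length_drop]; omega),
    List.getD_eq_getElem _ _ h]
  simp

lemma bergeCycle_mono {F F' : Finset (Finset ℕ)} (h : F' ⊆ F) {es : List (Finset ℕ)}
    (hc : IsBergeCycleIn F' es) : IsBergeCycleIn F es :=
  ⟨hc.1, hc.2.1, fun e he => h (hc.2.2.1 e he), hc.2.2.2⟩

/-- A Berge path in the family `F`. -/
def IsBP (F : Finset (Finset ℕ)) (es : List (Finset ℕ)) (vs : List ℕ) : Prop :=
  es.Nodup ∧ (∀ e ∈ es, e ∈ F) ∧ vs.Nodup ∧ vs.length + 1 = es.length ∧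
  ∀ i < vs.length, vs.getD i 0 ∈ es.getD i ∅ ∧ vs.getD i 0 ∈ es.getD (i + 1) ∅

lemma cycle_of_chord {F : Finset (Finset ℕ)} {es : List (Finset ℕ)} {vs : List ℕ}
    (hbp : IsBP F es vs) {a : ℕ} (ha : a + 2 ≤ es.length) {w : ℕ}
    (hw1 : w ∈ es.getD (es.length - 1) ∅) (hw2 : w ∈ es.getD a ∅)
    (hw3 : w ∉ vs.drop a) : IsBergeCycleIn F (es.drop a) := by
  obtain ⟨hnd, hmem, hvnd, hvlen, hlink⟩ := hbp
  set m := es.length with hm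
  have hla : a ≤ vs.length := by omega
  have hlen : (es.drop a).length = m - a := by rw [List.length_drop]
  have hvdl : (vs.drop a).length = vs.length - a := by rw [List.length_drop]
  refine ⟨by omega, List.Sublist.nodup (List.drop_sublist a es) hnd,
    fun e he => hmem e (List.mem_of_mem_drop he), vs.drop a ++ [w], ?_, ?_, ?_⟩
  · rw [List.nodup_append]
    refine ⟨List.Sublist.nodup (List.drop_sublist a vs) hvnd, List.nodup_singleton w, ?_⟩
    intro x hx y hx' hxy
    simp only [List.mem_singleton] at hx'
    subst hx' hxy
    exact hw3 hx
  · rw [List.length_append, hvdl, hlen]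
    simp only [List.length_singleton]
    omega
  · intro i hi
    simp only [hlen] at hi ⊢
    by_cases hil : i < vs.length - a
    · have h1 : (vs.drop a ++ [w]).getD i 0 = vs.getD (a + i) 0 := by
        rw [List.getD_append _ _ _ _ (by rw [hvdl]; omega), getD_drop' _ _ _ _ (by omega)]
      have h2 : (es.drop a).getD i ∅ = es.getD (a + i) ∅ := by
        rw [getD_drop' _ _ _ _ (by omega)]
      have h3 : (es.drop a).getD ((i + 1) % (m - a)) ∅ = es.getD (a + i + 1) ∅ := by
        rw [Nat.mod_eq_of_lt (by omega), getD_drop' _ _ _ _ (by omega)]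
        congr 1
      rw [h1, h2, h3]
      exact hlink (a + i) (by omega)
    · -- i = m - a - 1, the wrap-around
      have hieq : i = m - a - 1 := by omega
      have h1 : (vs.drop a ++ [w]).getD i 0 = w := by
        have : i = (vs.drop a).length := by rw [hvdl]; omega
        rw [this, getD_append_last]
      have h2 : (es.drop a).getD i ∅ = es.getD (m - 1) ∅ := by
        rw [getD_drop' _ _ _ _ (by omega)]
        congr 1
        omega
      have h3 : (i + 1) % (m - a) = 0 := by
        have : i + 1 = m - a := by omega
        rw [this, Nat.mod_self]
      have h4 : (es.drop a).getD 0 ∅ = es.getD a ∅ := by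
        rw [getD_drop' _ _ _ _ (by omega), Nat.add_zero]
      rw [h1, h2, h3, h4]
      exact ⟨hw1, hw2⟩

lemma exists_pendant (F : Finset (Finset ℕ)) (hne : F.Nonempty)
    (hacyc : ∀ es, ¬ IsBergeCycleIn F es) :
    ∃ e ∈ F, ((F.erase e).biUnion id ∩ e).card ≤ 1 := by
  by_contra hcon
  push_neg at hcon
  classical
  set N := F.card with hN
  have hN1 : 1 ≤ N := Finset.card_pos.mpr hne
  set P : ℕ → Prop := fun n => ∃ es vs, IsBP F es vs ∧ es.length = n with hP
  have hbound : ∀ es vs, IsBP F es vs → es.length ≤ N := by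
    intro es vs hbp
    have h1 : es.toFinset ⊆ F := by
      intro e he
      exact hbp.2.1 e (List.mem_toFinset.mp he)
    have h2 : es.toFinset.card = es.length := List.toFinset_card_of_nodup hbp.1
    rw [← h2]
    exact Finset.card_le_card h1
  have hP1 : P 1 := by
    obtain ⟨e0, he0⟩ := hne
    exact ⟨[e0], [], ⟨List.nodup_singleton e0, by simpa using he0, List.nodup_nil,
      by simp, by intro i hi; simp at hi⟩, rfl⟩
  have hn01 : 1 ≤ Nat.findGreatest P N := Nat.le_findGreatest hN1 hP1
  have hPn0 : P (Nat.findGreatest P N) := Nat.findGreatest_spec hN1 hP1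
  obtain ⟨es, vs, hbp, hlenn0⟩ := hPn0
  obtain ⟨hnd, hmem, hvnd, hvlen, hlink⟩ := hbp
  set m := es.length with hm
  have hm1 : 1 ≤ m := by omega
  set e := es.getD (m - 1) ∅ with he_def
  have he : e ∈ F := hmem e (getD_mem' (by omega))
  have hcon' : 1 < ((F.erase e).biUnion id ∩ e).card := hcon e he
  obtain ⟨w₁, hw₁, w₂, hw₂, hww⟩ := Finset.one_lt_card.mp hcon'
  set vlast := vs.getD (vs.length - 1) 0 with hvlast
  set w := if w₁ = vlast then w₂ else w₁ with hw_def
  have hwmem : w ∈ (F.erase e).biUnion id ∩ e := by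
    rw [hw_def]; split_ifs
    · exact hw₂
    · exact hw₁
  have hwne : w ≠ vlast := by
    rw [hw_def]; split_ifs with h
    · rw [← h]; exact fun hh => hww hh.symm
    · exact h
  have hwe : w ∈ e := (Finset.mem_inter.mp hwmem).2
  obtain ⟨f, hfmem, hwf⟩ := Finset.mem_biUnion.mp (Finset.mem_inter.mp hwmem).1
  have hbp' : IsBP F es vs := ⟨hnd, hmem, hvnd, hvlen, hlink⟩
  by_cases hwvs : w ∈ vs
  · -- w is a connector vertex on the path: chord cycle
    obtain ⟨j, hj, hjw⟩ := List.mem_iff_getElem.mp hwvs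
    have hjw' : vs.getD j 0 = w := by rw [List.getD_eq_getElem _ _ hj, hjw]
    have hjne : j ≠ vs.length - 1 := by
      intro hcontra
      apply hwne
      rw [hvlast, ← hcontra, hjw']
    have hacycle := cycle_of_chord hbp' (a := j + 1) (by omega) (w := w) hwe
      (by have := (hlink j hj).2; rwa [hjw'] at this)
      (by
        intro hwd
        obtain ⟨t, ht, htw⟩ := List.mem_iff_getElem.mp hwd
        have ht' : j + 1 + t < vs.length := by
          rw [List.length_drop] at ht
          omega
        have h1 : vs.getD (j + 1 + t) 0 = w := by
          rw [← getD_drop' vs (j + 1) t 0 ht', List.getD_eq_getElem _ _ ht]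
          exact htw
        have := getD_inj' hvnd ht' hj (by rw [h1, hjw'])
        omega)
    exact hacyc _ hacycle
  · by_cases hfes : f ∈ es
    · -- f is an earlier path edge: chord cycle
      obtain ⟨j, hj, hjf⟩ := List.mem_iff_getElem.mp hfes
      have hjf' : es.getD j ∅ = f := by rw [List.getD_eq_getElem _ _ hj, hjf]
      have hfne : f ≠ e := (Finset.mem_erase.mp hfmem).1
      have hjne : j ≠ m - 1 := by
        intro hcontra
        apply hfne
        rw [← hjf', he_def, hcontra]
      have hacycle := cycle_of_chord hbp' (a := j) (by omega) (w := w) hwe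
        (by rw [hjf']; exact hwf)
        (fun hwd => hwvs (List.mem_of_mem_drop hwd))
      exact hacyc _ hacycle
    · -- extend the path: contradicts maximality
      have hfF : f ∈ F := Finset.mem_of_mem_erase hfmem
      have hbpext : IsBP F (es ++ [f]) (vs ++ [w]) := by
        refine ⟨nodup_concat' hnd hfes, ?_, nodup_concat' hvnd hwvs, ?_, ?_⟩
        · intro e' he'
          rcases List.mem_append.mp he' with h | h
          · exact hmem e' h
          · simp only [List.mem_singleton] at h; subst h; exact hfF
        · simp only [List.length_append, List.length_singleton]
          omega
        · intro i hi
          simp only [List.length_append, List.length_singleton] at hi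
          by_cases hil : i < vs.length
          · rw [List.getD_append _ _ _ _ hil, List.getD_append _ _ _ _ (by omega),
              List.getD_append _ _ _ _ (by omega)]
            exact hlink i hil
          · have : i = vs.length := by omega
            subst this
            rw [getD_append_last]
            constructor
            · rw [List.getD_append _ _ _ _ (by omega)]
              have : vs.length = m - 1 := by omega
              rw [this]
              exact hwe
            · have : vs.length + 1 = es.length := hvlen
              rw [this, getD_append_last]
              exact hwf
      have hlenext : (es ++ [f]).length ≤ N := hbound _ _ hbpext
      have hlenext' : m + 1 ≤ N := by
        simp only [List.length_append, List.length_singleton] at hlenext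
        omega
      have hngr : ¬ P (m + 1) :=
        Nat.findGreatest_is_greatest (by omega) hlenext'
      exact hngr ⟨es ++ [f], vs ++ [w], hbpext, by simp; omega⟩

lemma forest_bound (k : ℕ) (hk : 1 ≤ k) :
    ∀ n (F : Finset (Finset ℕ)), F.card ≤ n →
    (∀ e ∈ F, e.card = k) → (∀ es, ¬ IsBergeCycleIn F es) → F.Nonempty →
    F.card * (k - 1) + 1 ≤ (F.biUnion id).card := by
  intro n
  induction n with
  | zero =>
    intro F hFn _ _ hne
    have := Finset.card_pos.mpr hne
    omega
  | succ n ih =>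
    intro F hFn hc hacyc hne
    obtain ⟨e, he, hpend⟩ := exists_pendant F hne hacyc
    set F' := F.erase e with hF'def
    have hcard' : F'.card + 1 = F.card := Finset.card_erase_add_one he
    have hFi : F = insert e F' := (Finset.insert_erase he).symm
    have hbiu : F.biUnion id = e ∪ F'.biUnion id := by
      conv_lhs => rw [hFi]
      rw [Finset.biUnion_insert]
      rfl
    have hsd : e \ F'.biUnion id = e \ (F'.biUnion id ∩ e) := by
      ext x; simp only [Finset.mem_sdiff, Finset.mem_inter]; tauto
    have hsdcard : (e \ F'.biUnion id).card = e.card - (F'.biUnion id ∩ e).card := by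
      rw [hsd, Finset.card_sdiff_of_subset Finset.inter_subset_right]
    have hek : e.card = k := hc e he
    have huni : (e \ F'.biUnion id).card + (F'.biUnion id).card = (e ∪ F'.biUnion id).card :=
      Finset.card_sdiff_add_card e (F'.biUnion id)
    by_cases hF'e : F' = ∅
    · rw [hbiu, hF'e]
      simp only [Finset.biUnion_empty, Finset.union_empty]
      have hF'0 : F'.card = 0 := by rw [hF'e]; rfl
      have : F.card = 1 := by omega
      rw [this, hek]
      omega
    · have hne' : F'.Nonempty := Finset.nonempty_iff_ne_empty.mpr hF'e
      have hrec := ih F' (by omega) (fun e' he' => hc e' (Finset.mem_of_mem_erase he'))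
        (fun es hcyc => hacyc es (bergeCycle_mono (Finset.erase_subset e F) hcyc)) hne'
      have hmul : F.card * (k - 1) = F'.card * (k - 1) + (k - 1) := by
        rw [← hcard']
        ring
      rw [hbiu, ← huni]
      omega

end Forest


section Cut

lemma cut_lemma {T' : ℕ} (k K : ℕ) (hk : 3 ≤ k) (X : Finset ℕ)
    (E' : Finset (Finset ℕ)) (J : Finset ℕ → Fin T') (ES : Fin T' → Finset (Finset ℕ))
    (hmem : ∀ e ∈ E', e ∈ ES (J e))
    (hsep : ∀ e ∈ E', ∀ f ∈ E', ∀ v : ℕ, v ∈ e → v ∈ f → J e ≠ J f → v ∈ X)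
    (hXne : ∀ e ∈ E', X ≠ e)
    (hgirth : ∀ i : Fin T', ∀ es : List (Finset ℕ),
      IsBergeCycleIn (insert X (ES i)) es → K ≤ es.length)
    (es : List (Finset ℕ)) (hcyc : IsBergeCycleIn E' es)
    (hlen : es.length + 2 ≤ K) : False := by
  classical
  obtain ⟨h2, hnd, hmemE, vs, hvnd, hvlen, hlink⟩ := hcyc
  set ℓ := es.length with hℓ
  have hℓ2 : 2 ≤ ℓ := h2
  have hℓpos : 0 < ℓ := by omega
  have hEmem : ∀ i : ℕ, es.getD (i % ℓ) ∅ ∈ E' := fun i =>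
    hmemE _ (getD_mem' (Nat.mod_lt i hℓpos))
  set g : ℕ → Fin T' := fun i => J (es.getD (i % ℓ) ∅) with hg
  have hgper : ∀ i, g (i + ℓ) = g i := by
    intro i
    simp only [hg, Nat.add_mod_right]
  have hlink' : ∀ i : ℕ, vs.getD (i % ℓ) 0 ∈ es.getD (i % ℓ) ∅ ∧
      vs.getD (i % ℓ) 0 ∈ es.getD ((i + 1) % ℓ) ∅ := by
    intro i
    have h0 := hlink (i % ℓ) (Nat.mod_lt _ hℓpos)
    rwa [mod_succ_eq hℓ2] at h0
  have hXv : ∀ i : ℕ, g i ≠ g (i + 1) → vs.getD (i % ℓ) 0 ∈ X := by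
    intro i hgi
    refine hsep _ (hEmem i) _ (hEmem (i + 1)) _ (hlink' i).1 ?_ hgi
    exact (hlink' i).2
  by_cases hconst : ∀ r, r < ℓ → J (es.getD r ∅) = J (es.getD 0 ∅)
  · -- all edges in the same absorber: es itself is a short cycle there
    have hcyc1 : IsBergeCycleIn (insert X (ES (J (es.getD 0 ∅)))) es := by
      refine ⟨h2, hnd, ?_, vs, hvnd, hvlen, hlink⟩
      intro e he
      obtain ⟨r, hr, hre⟩ := List.mem_iff_getElem.mp he
      have hre' : es.getD r ∅ = e := by rw [List.getD_eq_getElem _ _ hr, hre]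
      have heE : e ∈ E' := hmemE e he
      have h5 : J e = J (es.getD 0 ∅) := by rw [← hre']; exact hconst r hr
      exact Finset.mem_insert_of_mem (h5 ▸ hmem e heE)
    have := hgirth _ _ hcyc1
    omega
  · push_neg at hconst
    obtain ⟨r, hr, hrneq⟩ := hconst
    have hchg : ∃ a, g a ≠ g (a + 1) := by
      by_contra hall
      push_neg at hall
      have hconst' : ∀ s, g s = g 0 := by
        intro s
        induction s with
        | zero => rfl
        | succ n ihn => rw [← hall n]; exact ihn
      apply hrneq
      have h1 := hconst' r
      simp only [hg] at h1
      rwa [Nat.mod_eq_of_lt hr, Nat.zero_mod] at h1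
    obtain ⟨a₀, ha₀⟩ := hchg
    have ha' : g (a₀ + ℓ) ≠ g ((a₀ + ℓ) + 1) := by
      have e1 : (a₀ + ℓ) + 1 = (a₀ + 1) + ℓ := by omega
      rw [e1, hgper, hgper]
      exact ha₀
    obtain ⟨a, haℓ, ha⟩ : ∃ a, ℓ ≤ a ∧ g a ≠ g (a + 1) :=
      ⟨a₀ + ℓ, by omega, ha'⟩
    have hwit : g (a + 1 + (ℓ - 1)) ≠ g (a + 1 + (ℓ - 1) + 1) := by
      have e2 : a + 1 + (ℓ - 1) + 1 = (a + 1) + ℓ := by omega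
      have e1 : a + 1 + (ℓ - 1) = a + ℓ := by omega
      rw [e2, e1, hgper, hgper]
      exact ha
    have hfind : ∃ d, g (a + 1 + d) ≠ g (a + 1 + d + 1) := ⟨ℓ - 1, hwit⟩
    set d₀ := Nat.find hfind with hd₀def
    have hd₀spec : g (a + 1 + d₀) ≠ g (a + 1 + d₀ + 1) := Nat.find_spec hfind
    have hd₀le : d₀ ≤ ℓ - 1 := Nat.find_le hwit
    have hd₀min : ∀ d, d < d₀ → g (a + 1 + d) = g (a + 1 + d + 1) := by
      intro d hd
      have := Nat.find_min hfind hd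
      simpa using this
    have hchain : ∀ t, t ≤ d₀ → g (a + 1 + t) = g (a + 1) := by
      intro t
      induction t with
      | zero => intro _; rfl
      | succ n ihn =>
        intro hn
        have h1 := hd₀min n (by omega)
        have e1 : a + 1 + (n + 1) = a + 1 + n + 1 := by omega
        rw [e1, ← h1]
        exact ihn (by omega)
    have hinj : ∀ t t', t < ℓ → t' < ℓ →
        (a + 1 + t) % ℓ = (a + 1 + t') % ℓ → t = t' := by
      intro t t' ht ht' hmod
      have h2 : Nat.ModEq ℓ t t' := Nat.ModEq.add_left_cancel' (a + 1) hmod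
      rwa [Nat.ModEq, Nat.mod_eq_of_lt ht, Nat.mod_eq_of_lt ht'] at h2
    by_cases hdeg : d₀ = ℓ - 1
    · -- degenerate: a single edge in its own absorber, 2-cycle with X
      have hprev : g (a - 1) ≠ g a := by
        have e1 : a - 1 + ℓ = a + 1 + (ℓ - 2) := by omega
        have h1 : g (a - 1) = g (a + 1) := by
          rw [← hgper (a - 1), e1]
          exact hchain (ℓ - 2) (by omega)
        rw [h1]
        exact fun hh => ha hh.symm
      have hyX : vs.getD ((a - 1) % ℓ) 0 ∈ X := hXv (a - 1) (by
        have e1 : a - 1 + 1 = a := by omega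
        rw [e1]
        exact hprev)
      have hxX : vs.getD (a % ℓ) 0 ∈ X := hXv a ha
      have hye : vs.getD ((a - 1) % ℓ) 0 ∈ es.getD (a % ℓ) ∅ := by
        have h1 := (hlink' (a - 1)).2
        have e1 : a - 1 + 1 = a := by omega
        rwa [e1] at h1
      have hidx : a % ℓ ≠ (a - 1) % ℓ := by
        have h1 : ((a - 1) % ℓ + 1) % ℓ = (a - 1 + 1) % ℓ := mod_succ_eq hℓ2
        have e1 : a - 1 + 1 = a := by omega
        rw [e1] at h1
        have hq : (a - 1) % ℓ < ℓ := Nat.mod_lt _ hℓpos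
        rcases Nat.lt_or_ge ((a - 1) % ℓ + 1) ℓ with hlt | hge
        · rw [← h1, Nat.mod_eq_of_lt hlt]
          omega
        · have e2 : (a - 1) % ℓ + 1 = ℓ := by omega
          rw [← h1, e2, Nat.mod_self]
          omega
      have hxy : vs.getD (a % ℓ) 0 ≠ vs.getD ((a - 1) % ℓ) 0 := by
        intro hh
        exact hidx (getD_inj' hvnd (by rw [hvlen]; exact Nat.mod_lt _ hℓpos)
          (by rw [hvlen]; exact Nat.mod_lt _ hℓpos) hh)
      have hc2 : IsBergeCycleIn (insert X (ES (g a))) [es.getD (a % ℓ) ∅, X] := by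
        refine ⟨by simp, ?_, ?_, [vs.getD (a % ℓ) 0, vs.getD ((a - 1) % ℓ) 0], ?_, by simp, ?_⟩
        · simp only [List.nodup_cons, List.mem_singleton, List.not_mem_nil,
            not_false_iff, List.nodup_nil, and_true]
          exact fun hh => hXne _ (hEmem a) hh.symm
        · intro e he
          simp only [List.mem_cons, List.mem_singleton, List.not_mem_nil, or_false] at he
          rcases he with hh | hh
          · subst hh
            exact Finset.mem_insert_of_mem (hmem _ (hEmem a))
          · subst hh
            exact Finset.mem_insert_self _ _
        · simp only [List.nodup_cons, List.mem_singleton, List.not_mem_nil,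
            not_false_iff, List.nodup_nil, and_true]
          exact hxy
        · intro i hi
          have hi2 : i < 2 := by simpa using hi
          interval_cases i
          · constructor
            · simpa using (hlink' a).1
            · simpa using hxX
          · constructor
            · simpa using hyX
            · simpa using hye
      have := hgirth _ _ hc2
      simp only [List.length_cons, List.length_nil] at this
      omega
    · -- main case: arc between two consecutive change points, closed with X
      have hd₀le' : d₀ ≤ ℓ - 2 := by omega
      set es2 : List (Finset ℕ) :=
        ((List.range (d₀ + 1)).map fun t => es.getD ((a + 1 + t) % ℓ) ∅) ++ [X] with hes2
      set vs2 : List ℕ :=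
        ((List.range (d₀ + 1)).map fun t => vs.getD ((a + 1 + t) % ℓ) 0) ++
          [vs.getD (a % ℓ) 0] with hvs2
      have hes2len : es2.length = d₀ + 2 := by
        rw [hes2]
        simp
      have hvs2len : vs2.length = d₀ + 2 := by
        rw [hvs2]
        simp
      have hes2get : ∀ i, i ≤ d₀ → es2.getD i ∅ = es.getD ((a + 1 + i) % ℓ) ∅ := by
        intro i hi
        rw [hes2, List.getD_append _ _ _ _ (by simp; omega), getD_map_range _ _ _ (by omega)]
      have hes2last : es2.getD (d₀ + 1) ∅ = X := by
        rw [hes2, List.getD_append_right _ _ _ _ (by simp)]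
        simp
      have hvs2get : ∀ i, i ≤ d₀ → vs2.getD i 0 = vs.getD ((a + 1 + i) % ℓ) 0 := by
        intro i hi
        rw [hvs2, List.getD_append _ _ _ _ (by simp; omega), getD_map_range _ _ _ (by omega)]
      have hvs2last : vs2.getD (d₀ + 1) 0 = vs.getD (a % ℓ) 0 := by
        rw [hvs2, List.getD_append_right _ _ _ _ (by simp)]
        simp
      have hc2 : IsBergeCycleIn (insert X (ES (g (a + 1)))) es2 := by
        refine ⟨by omega, ?_, ?_, vs2, ?_, by omega, ?_⟩
        · -- es2 nodup
          rw [hes2]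
          apply nodup_concat'
          · apply List.Nodup.map_on _ List.nodup_range
            intro t ht t' ht' hee
            simp only [List.mem_range] at ht ht'
            have h1 := getD_inj' hnd (Nat.mod_lt _ hℓpos) (Nat.mod_lt _ hℓpos) hee
            exact hinj t t' (by omega) (by omega) h1
          · intro hX
            simp only [List.mem_map, List.mem_range] at hX
            obtain ⟨t, ht, hte⟩ := hX
            exact hXne _ (hEmem (a + 1 + t)) hte.symm
        · -- membership
          intro e he
          rw [hes2] at he
          rcases List.mem_append.mp he with hh | hh
          · simp only [List.mem_map, List.mem_range] at hh
            obtain ⟨t, ht, hte⟩ := hh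
            subst hte
            have hJ : J (es.getD ((a + 1 + t) % ℓ) ∅) = g (a + 1) :=
              hchain t (by omega)
            exact Finset.mem_insert_of_mem (hJ ▸ hmem _ (hEmem (a + 1 + t)))
          · simp only [List.mem_singleton] at hh
            subst hh
            exact Finset.mem_insert_self _ _
        · -- vs2 nodup
          rw [hvs2]
          apply nodup_concat'
          · apply List.Nodup.map_on _ List.nodup_range
            intro t ht t' ht' hee
            simp only [List.mem_range] at ht ht'
            have h1 := getD_inj' hvnd (by rw [hvlen]; exact Nat.mod_lt _ hℓpos)
              (by rw [hvlen]; exact Nat.mod_lt _ hℓpos) hee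
            exact hinj t t' (by omega) (by omega) h1
          · intro hX
            simp only [List.mem_map, List.mem_range] at hX
            obtain ⟨t, ht, hte⟩ := hX
            have h1 := getD_inj' hvnd (by rw [hvlen]; exact Nat.mod_lt _ hℓpos)
              (by rw [hvlen]; exact Nat.mod_lt _ hℓpos) hte
            have h2 : (a + 1 + t) % ℓ = (a + 1 + (ℓ - 1)) % ℓ := by
              rw [h1]
              have e1 : a + 1 + (ℓ - 1) = a + ℓ := by omega
              rw [e1, Nat.add_mod_right]
            have := hinj t (ℓ - 1) (by omega) (by omega) h2
            omega
        · -- links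
          intro i hi
          rw [hes2len] at hi
          rcases Nat.lt_or_ge i d₀ with hii | hii
          · have h1 : (i + 1) % (d₀ + 2) = i + 1 := Nat.mod_eq_of_lt (by omega)
            rw [hes2len, h1, hvs2get i (by omega), hes2get i (by omega),
              hes2get (i + 1) (by omega)]
            constructor
            · exact (hlink' (a + 1 + i)).1
            · have h2 := (hlink' (a + 1 + i)).2
              have e1 : a + 1 + i + 1 = a + 1 + (i + 1) := by omega
              rwa [e1] at h2
          · rcases Nat.lt_or_ge i (d₀ + 1) with hii2 | hii2
            · -- i = d₀
              have e0 : i = d₀ := by omega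
              have h1 : (i + 1) % (d₀ + 2) = i + 1 := Nat.mod_eq_of_lt (by omega)
              rw [hes2len, h1, e0, hvs2get d₀ le_rfl, hes2get d₀ le_rfl, hes2last]
              constructor
              · exact (hlink' (a + 1 + d₀)).1
              · exact hXv (a + 1 + d₀) hd₀spec
            · -- i = d₀ + 1
              have e0 : i = d₀ + 1 := by omega
              have h1 : (d₀ + 1 + 1) % (d₀ + 2) = 0 := by
                have e3 : d₀ + 1 + 1 = d₀ + 2 := by omega
                rw [e3, Nat.mod_self]
              rw [hes2len, e0, h1, hvs2last, hes2last, hes2get 0 (by omega)]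
              constructor
              · exact hXv a ha
              · have h2 := (hlink' a).2
                have e1 : a + 1 + 0 = a + 1 := by omega
                rw [e1]
                exact h2
      have := hgirth _ _ hc2
      rw [hes2len] at this
      omega

end Cut

set_option maxHeartbeats 1000000 in
/-- Books of sparse absorbers have small k-density. -/
theorem book_of_sparse_absorbers_density (k T : ℕ) (hk : 3 ≤ k) (hT : 1 ≤ T)
    (γ : ℝ) (hγ : 0 < γ) :
    ∃ K₀ : ℕ, ∀ K : ℕ, K₀ ≤ K →
      ∀ (H : HGraph) (X : Finset ℕ) (A : Fin T → Absorber H k X),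
        X.card = k - 1 → H.IsUniform k →
        (∀ j, (A j).KSparse K) →
        (∀ j j', j ≠ j' → Disjoint ((A j).verts) ((A j').verts)) →
        H.verts = X ∪ Finset.univ.biUnion (fun j => (A j).verts) →
        H.edges = Finset.univ.biUnion (fun j => (A j).edgeSet) →
        kDensityLE H k (2 / ((k : ℝ) - 1) + γ) := by
  classical
  have hkR : (3 : ℝ) ≤ (k : ℝ) := by exact_mod_cast hk
  have hk1 : (0 : ℝ) < (k : ℝ) - 1 := by linarith
  set c : ℝ := 2 / ((k : ℝ) - 1) + γ with hcdef
  have hcpos : 0 < c := by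
    have h1 : 0 < 2 / ((k : ℝ) - 1) := by positivity
    rw [hcdef]
    linarith
  have hck : c * ((k : ℝ) - 1) = 2 + γ * ((k : ℝ) - 1) := by
    rw [hcdef, add_mul, div_mul_cancel₀ _ (ne_of_gt hk1)]
  set E₀ : ℕ := Nat.ceil ((c * (2 * T * ((k : ℝ) - 1) + 2 * k)) / (γ * ((k : ℝ) - 1))) with hE₀def
  refine ⟨E₀ + 2, ?_⟩
  intro K hK H X A hX hunif hsparse hdisj hverts hedges
  intro V' hV'sub E' hE'sub hEV hVk
  have hkk2 : 2 ≤ k := by omega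
  have hT0 : 0 < T := hT
  have hecard : ∀ e ∈ E', e.card = k := fun e he => (hunif e (hE'sub he)).2
  -- the collection of side-`s` paths of absorber `j`
  set pathsOf : Fin T → Bool → Finset (List ℕ) :=
    fun j s => Finset.univ.image (cond s (A j).P₁ (A j).P₂) with hpathsOf
  have hlp_of : ∀ (j : Fin T) (s : Bool) (vs : List ℕ),
      vs ∈ pathsOf j s → H.IsLoosePath k vs := by
    intro j s vs hvs
    rw [hpathsOf] at hvs
    obtain ⟨p, -, hp⟩ := Finset.mem_image.mp hvs
    cases s
    · rw [← hp]; exact (A j).path₂ p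
    · rw [← hp]; exact (A j).path₁ p
  have hVsub_of : ∀ (j : Fin T) (s : Bool) (vs : List ℕ),
      vs ∈ pathsOf j s → vs.toFinset ⊆ (A j).verts ∪ X := by
    intro j s vs hvs
    rw [hpathsOf] at hvs
    obtain ⟨p, -, hp⟩ := Finset.mem_image.mp hvs
    cases s
    · rw [← hp]
      intro x hx
      exact Finset.mem_union_left _ (Finset.mem_biUnion.mpr ⟨p, Finset.mem_univ _, hx⟩)
    · rw [← hp]
      intro x hx
      have hx1 : x ∈ Finset.univ.biUnion (fun q => ((A j).P₁ q).toFinset) :=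
        Finset.mem_biUnion.mpr ⟨p, Finset.mem_univ _, hx⟩
      rw [(A j).cover] at hx1
      exact hx1
  have hdisj_of : ∀ (j : Fin T) (s : Bool) (vs vs' : List ℕ),
      vs ∈ pathsOf j s → vs' ∈ pathsOf j s → vs ≠ vs' →
      Disjoint vs.toFinset vs'.toFinset := by
    intro j s vs vs' hvs hvs' hne
    rw [hpathsOf] at hvs hvs'
    obtain ⟨p, -, hp⟩ := Finset.mem_image.mp hvs
    obtain ⟨p', -, hp'⟩ := Finset.mem_image.mp hvs'
    have hpp : p ≠ p' := by
      intro hct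
      apply hne
      rw [← hp, ← hp', hct]
    cases s
    · rw [← hp, ← hp']
      exact (A j).disj₂ p p' hpp
    · rw [← hp, ← hp']
      exact (A j).disj₁ p p' hpp
  have hES_of : ∀ (j : Fin T) (s : Bool) (vs : List ℕ) (i : ℕ),
      vs ∈ pathsOf j s → i < numPathEdges k vs →
      pathEdge k vs i ∈ (A j).edgeSet := by
    intro j s vs i hvs hi
    rw [hpathsOf] at hvs
    obtain ⟨p, -, hp⟩ := Finset.mem_image.mp hvs
    rw [Absorber.edgeSet]
    cases s
    · simp only [Bool.cond_false] at hp
      apply Finset.mem_union_right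
      refine Finset.mem_biUnion.mpr ⟨p, Finset.mem_univ _, ?_⟩
      rw [pathEdges, List.mem_toFinset]
      refine List.mem_map.mpr ⟨i, List.mem_range.mpr ?_, ?_⟩
      · rw [hp]; exact hi
      · rw [hp]
    · simp only [Bool.cond_true] at hp
      apply Finset.mem_union_left
      refine Finset.mem_biUnion.mpr ⟨p, Finset.mem_univ _, ?_⟩
      rw [pathEdges, List.mem_toFinset]
      refine List.mem_map.mpr ⟨i, List.mem_range.mpr ?_, ?_⟩
      · rw [hp]; exact hi
      · rw [hp]
  -- choose a representation for every edge of E'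
  have hq' : ∀ e : Finset ℕ, ∃ (j : Fin T) (s : Bool) (vs : List ℕ) (i : ℕ),
      e ∈ E' → vs ∈ pathsOf j s ∧ i < numPathEdges k vs ∧ e = pathEdge k vs i := by
    intro e
    by_cases he : e ∈ E'
    · have heH : e ∈ H.edges := hE'sub he
      rw [hedges] at heH
      obtain ⟨j, -, hej⟩ := Finset.mem_biUnion.mp heH
      rw [Absorber.edgeSet] at hej
      rcases Finset.mem_union.mp hej with h1 | h1
      · obtain ⟨p, -, hp⟩ := Finset.mem_biUnion.mp h1
        rw [pathEdges, List.mem_toFinset] at hp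
        obtain ⟨i, hi, hie⟩ := List.mem_map.mp hp
        exact ⟨j, true, (A j).P₁ p, i, fun _ =>
          ⟨Finset.mem_image.mpr ⟨p, Finset.mem_univ _, rfl⟩,
            List.mem_range.mp hi, hie.symm⟩⟩
      · obtain ⟨p, -, hp⟩ := Finset.mem_biUnion.mp h1
        rw [pathEdges, List.mem_toFinset] at hp
        obtain ⟨i, hi, hie⟩ := List.mem_map.mp hp
        exact ⟨j, false, (A j).P₂ p, i, fun _ =>
          ⟨Finset.mem_image.mpr ⟨p, Finset.mem_univ _, rfl⟩,
            List.mem_range.mp hi, hie.symm⟩⟩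
    · exact ⟨⟨0, hT0⟩, true, [], 0, fun h => absurd h he⟩
  choose jF sF vsF iF hF using hq'
  have hlpl : ∀ e, e ∈ E' → IsLoosePathList k (vsF e) := fun e he =>
    (hlp_of _ _ _ (hF e he).1).1
  have hesub : ∀ e, e ∈ E' → e ⊆ (vsF e).toFinset := by
    intro e he
    have h1 := (hF e he).2.2
    have h2 := pathEdge_subset_toFinset (show 2 ≤ k by omega) (hlpl e he) (hF e he).2.1
    rw [← h1] at h2
    exact h2
  have hevsub : ∀ e, e ∈ E' → e ⊆ (A (jF e)).verts ∪ X := fun e he =>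
    (hesub e he).trans (hVsub_of _ _ _ (hF e he).1)
  -- tails
  set tl : Finset ℕ → Finset ℕ := fun e => tailF k (vsF e) (iF e) with htldef
  have htl_sub : ∀ e, e ∈ E' → tl e ⊆ e := by
    intro e he
    have h1 := (hF e he).2.2
    show tailF k (vsF e) (iF e) ⊆ e
    intro x hx
    have h3 := tailF_subset (show 2 ≤ k by omega) (vsF e) (iF e) hx
    rw [← h1] at h3
    exact h3
  have htl_card : ∀ e, e ∈ E' → (tl e).card = k - 1 := fun e he =>
    tailF_card (by omega) (hlpl e he) (hF e he).2.1
  have htl_disj : ∀ e ∈ E', ∀ f ∈ E', e ≠ f → jF e = jF f → sF e = sF f →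
      Disjoint (tl e) (tl f) := by
    intro e he f hf hef hj hs
    have hmf : vsF f ∈ pathsOf (jF e) (sF e) := by
      rw [hj, hs]
      exact (hF f hf).1
    by_cases hvv : vsF e = vsF f
    · have hii : iF e ≠ iF f := by
        intro hii
        apply hef
        rw [(hF e he).2.2, (hF f hf).2.2, hvv, hii]
      show Disjoint (tailF k (vsF e) (iF e)) (tailF k (vsF f) (iF f))
      rw [← hvv]
      exact tailF_disjoint_same (by omega) (hlpl e he) (hF e he).2.1
        (by rw [hvv]; exact (hF f hf).2.1) hii
    · have hdd := hdisj_of (jF e) (sF e) (vsF e) (vsF f) (hF e he).1 hmf hvv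
      refine Finset.disjoint_left.mpr ?_
      intro x hx hx'
      have hx1 : x ∈ (vsF e).toFinset :=
        pathEdge_subset_toFinset (show 2 ≤ k by omega) (hlpl e he) (hF e he).2.1
          (tailF_subset (show 2 ≤ k by omega) (vsF e) (iF e) hx)
      have hx2 : x ∈ (vsF f).toFinset :=
        pathEdge_subset_toFinset (show 2 ≤ k by omega) (hlpl f hf) (hF f hf).2.1
          (tailF_subset (show 2 ≤ k by omega) (vsF f) (iF f) hx')
      exact Finset.disjoint_left.mp hdd hx1 hx2
  -- the fibers
  set Fib : Fin T × Bool → Finset (Finset ℕ) :=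
    fun z => E'.filter (fun e => (jF e, sF e) = z) with hFibdef
  have hfibsum : ∑ z ∈ Finset.univ, (Fib z).card = E'.card :=
    (Finset.card_eq_sum_card_fiberwise
      (fun e _ => Finset.mem_univ ((jF e, sF e)))).symm
  have hfibmem : ∀ z, ∀ e ∈ Fib z, e ∈ E' ∧ jF e = z.1 ∧ sF e = z.2 := by
    intro z e he
    rw [hFibdef, Finset.mem_filter] at he
    refine ⟨he.1, ?_, ?_⟩
    · rw [← he.2]
    · rw [← he.2]
  have hfib_lb : ∀ z : Fin T × Bool,
      (Fib z).card * (k - 1) ≤ (((Fib z).biUnion id) \ X).card + (k - 1) := by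
    intro z
    have h1 : ((Fib z).biUnion tl).card = ∑ e ∈ Fib z, (tl e).card := by
      apply Finset.card_biUnion
      intro e he f hf hef
      obtain ⟨he1, he2, he3⟩ := hfibmem z e he
      obtain ⟨hf1, hf2, hf3⟩ := hfibmem z f hf
      exact htl_disj e he1 f hf1 hef (by rw [he2, hf2]) (by rw [he3, hf3])
    have h2 : ∑ e ∈ Fib z, (tl e).card = (Fib z).card * (k - 1) := by
      rw [Finset.sum_congr rfl (fun e he => htl_card e (hfibmem z e he).1),
        Finset.sum_const, smul_eq_mul]
    have h3 : (Fib z).biUnion tl ⊆ (Fib z).biUnion id := by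
      intro x hx
      obtain ⟨e, he, hxe⟩ := Finset.mem_biUnion.mp hx
      exact Finset.mem_biUnion.mpr ⟨e, he, htl_sub e (hfibmem z e he).1 hxe⟩
    have h4 : ((Fib z).biUnion id).card ≤ (((Fib z).biUnion id) \ X).card + X.card :=
      Finset.card_le_card_sdiff_add_card
    have h5 := Finset.card_le_card h3
    rw [h1, h2] at h5
    rw [hX] at h4
    omega
  have hU_sub : ∀ z : Fin T × Bool,
      ((Fib z).biUnion id) \ X ⊆ (A z.1).verts ∩ V' := by
    intro z x hx
    rw [Finset.mem_sdiff] at hx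
    obtain ⟨hx1, hx2⟩ := hx
    obtain ⟨e, he, hxe⟩ := Finset.mem_biUnion.mp hx1
    obtain ⟨he1, he2, -⟩ := hfibmem z e he
    refine Finset.mem_inter.mpr ⟨?_, hEV e he1 hxe⟩
    have h1 := hevsub e he1 hxe
    rcases Finset.mem_union.mp h1 with h2 | h2
    · rw [← he2]
      exact h2
    · exact absurd h2 hx2
  have hside : ∀ s : Bool,
      ∑ j ∈ (Finset.univ : Finset (Fin T)), (((Fib (j, s)).biUnion id) \ X).card
        ≤ V'.card := by
    intro s
    have hWd : ∀ j ∈ (Finset.univ : Finset (Fin T)), ∀ j' ∈ (Finset.univ : Finset (Fin T)),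
        j ≠ j' → Disjoint (((Fib (j, s)).biUnion id) \ X) (((Fib (j', s)).biUnion id) \ X) := by
      intro j _ j' _ hjj
      have h1 := (hU_sub (j, s)).trans Finset.inter_subset_left
      have h2 := (hU_sub (j', s)).trans Finset.inter_subset_left
      exact (hdisj j j' hjj).mono h1 h2
    rw [← Finset.card_biUnion hWd]
    apply Finset.card_le_card
    intro x hx
    obtain ⟨j, -, hxj⟩ := Finset.mem_biUnion.mp hx
    exact Finset.mem_of_mem_inter_right (hU_sub (j, s) hxj)
  have hKEY1 : E'.card * (k - 1) ≤ 2 * V'.card + 2 * T * (k - 1) := by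
    have h1 : E'.card * (k - 1) = ∑ z ∈ Finset.univ, (Fib z).card * (k - 1) := by
      rw [← Finset.sum_mul, hfibsum]
    have h2 : ∑ z ∈ Finset.univ, (Fib z).card * (k - 1)
        ≤ ∑ z ∈ Finset.univ, ((((Fib z).biUnion id) \ X).card + (k - 1)) :=
      Finset.sum_le_sum (fun z _ => hfib_lb z)
    have h3 : ∑ z ∈ Finset.univ, ((((Fib z).biUnion id) \ X).card + (k - 1))
        = (∑ z ∈ Finset.univ, (((Fib z).biUnion id) \ X).card)
          + (Finset.univ : Finset (Fin T × Bool)).card * (k - 1) := by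
      rw [Finset.sum_add_distrib, Finset.sum_const, smul_eq_mul]
    have h4 : (Finset.univ : Finset (Fin T × Bool)).card = 2 * T := by
      rw [Finset.card_univ, Fintype.card_prod, Fintype.card_fin, Fintype.card_bool]
      ring
    have h5 : ∑ z ∈ (Finset.univ : Finset (Fin T × Bool)),
        (((Fib z).biUnion id) \ X).card ≤ 2 * V'.card := by
      rw [Fintype.sum_prod_type]
      have h6 : ∀ j : Fin T, ∑ s ∈ (Finset.univ : Finset Bool),
          (((Fib (j, s)).biUnion id) \ X).card
          = (((Fib (j, true)).biUnion id) \ X).card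
            + (((Fib (j, false)).biUnion id) \ X).card := by
        intro j
        rw [Fintype.sum_bool]
      rw [Finset.sum_congr rfl (fun j _ => h6 j), Finset.sum_add_distrib]
      have := hside true
      have := hside false
      omega
    rw [h4] at h3
    omega
  -- acyclicity in the small case
  have hacyc : E'.card ≤ E₀ → ∀ es, ¬ IsBergeCycleIn E' es := by
    intro hsmall es hcyc
    have hlenb : es.length ≤ E'.card := by
      have h1 : es.toFinset ⊆ E' := fun e he => hcyc.2.2.1 e (List.mem_toFinset.mp he)
      have h2 : es.toFinset.card = es.length := List.toFinset_card_of_nodup hcyc.2.1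
      rw [← h2]
      exact Finset.card_le_card h1
    refine cut_lemma k K hk X E' jF (fun j => (A j).edgeSet) ?_ ?_ ?_ ?_ es hcyc (by omega)
    · intro e he
      have h1 := (hF e he).2.2
      have h2 := hES_of (jF e) (sF e) (vsF e) (iF e) (hF e he).1 (hF e he).2.1
      rw [← h1] at h2
      exact h2
    · intro e he f hf v hve hvf hnej
      by_contra hvX
      have h1 := hevsub e he hve
      have h2 := hevsub f hf hvf
      rcases Finset.mem_union.mp h1 with h3 | h3
      · rcases Finset.mem_union.mp h2 with h4 | h4
        · exact Finset.disjoint_left.mp (hdisj _ _ hnej) h3 h4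
        · exact hvX h4
      · exact hvX h3
    · intro e he hXe
      have h1 := hecard e he
      rw [← hXe] at h1
      omega
    · intro i es' hcyc'
      exact hsparse i es' hcyc'
  have hKEY2 : 1 ≤ E'.card → E'.card ≤ E₀ → E'.card * (k - 1) + 1 ≤ V'.card := by
    intro hne1 hsmall
    have hne : E'.Nonempty := Finset.card_pos.mp hne1
    have hfor := forest_bound k (by omega) E'.card E' le_rfl hecard (hacyc hsmall) hne
    have hsub2 : E'.biUnion id ⊆ V' := by
      intro x hx
      obtain ⟨e, he, hxe⟩ := Finset.mem_biUnion.mp hx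
      exact hEV e he hxe
    exact hfor.trans (Finset.card_le_card hsub2)
  -- final arithmetic
  have hVk1 : k + 1 ≤ V'.card := hVk
  have hdpos : (0 : ℝ) < (V'.card : ℝ) - (k : ℝ) := by
    have h1 : ((k : ℕ) : ℝ) + 1 ≤ ((V'.card : ℕ) : ℝ) := by exact_mod_cast hVk1
    linarith
  rw [div_le_iff₀ hdpos]
  have hkm : ((k - 1 : ℕ) : ℝ) = (k : ℝ) - 1 := by
    rw [Nat.cast_sub (by omega : 1 ≤ k)]
    norm_num
  by_cases h0 : E'.card ≤ 1
  · have h1 : ((E'.card : ℕ) : ℝ) ≤ 1 := by exact_mod_cast h0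
    have h2 : 0 ≤ c * ((V'.card : ℝ) - k) := le_of_lt (mul_pos hcpos hdpos)
    linarith
  · push_neg at h0
    by_cases h1 : E'.card ≤ E₀
    · -- small case
      have h2 := hKEY2 (by omega) h1
      have h3 : ((E'.card * (k - 1) + 1 : ℕ) : ℝ) ≤ ((V'.card : ℕ) : ℝ) :=
        Nat.cast_le.mpr h2
      rw [Nat.cast_add, Nat.cast_mul, hkm, Nat.cast_one] at h3
      have h4 : ((E'.card : ℝ) - 1) * ((k : ℝ) - 1) ≤ (V'.card : ℝ) - k := by
        nlinarith
      have h5 : (2 : ℝ) ≤ E'.card := by exact_mod_cast h0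
      have hmul4 : c * (((E'.card : ℝ) - 1) * ((k : ℝ) - 1)) ≤ c * ((V'.card : ℝ) - k) :=
        mul_le_mul_of_nonneg_left h4 hcpos.le
      have h6 : ((E'.card : ℝ) - 1) * (c * ((k : ℝ) - 1))
          = ((E'.card : ℝ) - 1) * (2 + γ * ((k : ℝ) - 1)) := by rw [hck]
      have h7 : ((E'.card : ℝ) - 1) * 1 ≤ ((E'.card : ℝ) - 1) * (2 + γ * ((k : ℝ) - 1)) :=
        mul_le_mul_of_nonneg_left (by nlinarith [mul_pos hγ hk1]) (by linarith)
      have h8 : c * (((E'.card : ℝ) - 1) * ((k : ℝ) - 1))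
          = ((E'.card : ℝ) - 1) * (c * ((k : ℝ) - 1)) := by ring
      linarith [hmul4, h6, h7, h8]
    · -- large case
      push_neg at h1
      have h2 : ((E'.card * (k - 1) : ℕ) : ℝ) ≤ ((2 * V'.card + 2 * T * (k - 1) : ℕ) : ℝ) :=
        Nat.cast_le.mpr hKEY1
      push_cast [hkm] at h2
      have hE0spec : c * (2 * T * ((k : ℝ) - 1) + 2 * k) / (γ * ((k : ℝ) - 1)) ≤ (E₀ : ℝ) :=
        Nat.le_ceil _
      have he'E0 : (E₀ : ℝ) + 1 ≤ (E'.card : ℝ) := by exact_mod_cast h1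
      have hγk : (0 : ℝ) < γ * ((k : ℝ) - 1) := mul_pos hγ hk1
      have hmain : c * (2 * T * ((k : ℝ) - 1) + 2 * k) ≤ γ * ((k : ℝ) - 1) * (E'.card : ℝ) := by
        rw [div_le_iff₀ hγk] at hE0spec
        have h8 : γ * ((k : ℝ) - 1) * (E₀ : ℝ) ≤ γ * ((k : ℝ) - 1) * (E'.card : ℝ) :=
          mul_le_mul_of_nonneg_left (by linarith) hγk.le
        nlinarith [h8, hE0spec]
      have h7 : c * ((k : ℝ) - 1) * (E'.card : ℝ) = (2 + γ * ((k : ℝ) - 1)) * (E'.card : ℝ) :=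
        congrArg (· * (E'.card : ℝ)) hck
      have hmul2 := mul_le_mul_of_nonneg_left h2 hcpos.le
      linarith [hmul2, h7, hmain]
end
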